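/- arXiv:2101.09950 — 6 statements merged into one kernel-verified Lean document; each statement's English description precedes it below -/
import Mathlib

section
/- Let E be a real Banach space and let λ be an infinite cardinal equal to the least cardinality of a dense subset of the continuous dual space E* (with the dual norm). Then the least cardinality of a dense subset of the space K(E) of compact operators on E, equipped with the operator norm, is also λ. -/
open Cardinal Metric Set

/-- The density of a topological space: the least cardinality of a dense subset. -/
noncomputable def densityCard (Y : Type u) [TopologicalSpace Y] : Cardinal.{u} :=
  sInf {c : Cardinal.{u} | ∃ D : Set Y, Dense D ∧ #D = c}

lemma densityCard_le {Y : Type u} [TopologicalSpace Y] {D : Set Y} (h : Dense D) :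
    densityCard Y ≤ #D := csInf_le' ⟨D, h, rfl⟩

lemma exists_dense_densityCard (Y : Type u) [TopologicalSpace Y] :
    ∃ D : Set Y, Dense D ∧ #D = densityCard Y := by
  have : densityCard Y ∈ {c : Cardinal.{u} | ∃ D : Set Y, Dense D ∧ #D = c} :=
    csInf_mem ⟨#(univ : Set Y), univ, dense_univ, rfl⟩
  obtain ⟨D, hD, hc⟩ := this
  exact ⟨D, hD, hc⟩

lemma le_densityCard {Y : Type u} [TopologicalSpace Y] {c : Cardinal.{u}}
    (h : ∀ D : Set Y, Dense D → c ≤ #D) : c ≤ densityCard Y := by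
  have hne : {c : Cardinal.{u} | ∃ D : Set Y, Dense D ∧ #D = c}.Nonempty :=
    ⟨_, univ, dense_univ, rfl⟩
  apply le_csInf hne
  rintro _ ⟨D, hD, rfl⟩
  exact h D hD

section C
variable {E : Type u} [NormedAddCommGroup E] [NormedSpace ℝ E]

/-- A helper: a norming-ish vector for a functional. -/
lemma exists_almost_norming (d : E →L[ℝ] ℝ) {r : ℝ} (hr : 0 < r) :
    ∃ x : E, ‖x‖ ≤ 1 ∧ ‖d‖ - r ≤ d x := by
  rcases le_or_gt ‖d‖ r with h | h
  · exact ⟨0, by simp, by simp; linarith⟩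
  · obtain ⟨x, hx, hdx⟩ := d.exists_lt_apply_of_lt_opNorm (r := ‖d‖ - r) (by linarith)
    rcases le_or_gt 0 (d x) with h0 | h0
    · exact ⟨x, hx.le, by rw [Real.norm_eq_abs, abs_of_nonneg h0] at hdx; linarith⟩
    · refine ⟨-x, by simpa using hx.le, ?_⟩
      rw [Real.norm_eq_abs, abs_of_neg h0] at hdx
      have : d (-x) = -(d x) := map_neg d x
      rw [this]; linarith

lemma exists_small_dense_of_dense_dual (Dstar : Set (E →L[ℝ] ℝ)) (hD : Dense Dstar) :
    ∃ D : Set E, Dense D ∧ #D ≤ max #↥Dstar ℵ₀ := by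
  classical
  have hpos : ∀ p : ↥Dstar × ℕ, (0:ℝ) < 1/(p.2+1) := by
    intro p; positivity
  choose xc hxc1 hxc2 using fun p : ↥Dstar × ℕ =>
    exists_almost_norming (E := E) p.1.1 (hpos p)
  set S : Set E := Set.range xc with hS
  -- the closed span of S is everything
  set Y := (Submodule.span ℝ S).topologicalClosure with hY
  have hYS : S ⊆ (Y : Set E) := fun x hx =>
    Submodule.le_topologicalClosure _ (Submodule.subset_span hx)
  have hYuniv : ∀ z : E, z ∈ Y := by
    by_contra hcon
    push_neg at hcon
    obtain ⟨z, hz⟩ := hcon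
    obtain ⟨f, u, hfu, huz⟩ := geometric_hahn_banach_closed_point
      (Y.convex) (Submodule.isClosed_topologicalClosure _) hz
    have hf0 : ∀ a ∈ Y, f a = 0 := by
      intro a ha
      by_contra hfa
      have hmem := Y.smul_mem ((|u|+1)/(f a)) ha
      have := hfu _ hmem
      rw [map_smul, smul_eq_mul, div_mul_cancel₀ _ hfa] at this
      have : u ≤ |u| := le_abs_self u
      linarith [hfu _ hmem, le_abs_self u,
        (by rw [map_smul, smul_eq_mul, div_mul_cancel₀ _ hfa] :
          f (((|u|+1)/(f a)) • a) = |u|+1)]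
    have hu0 : 0 < u := by
      have := hfu 0 Y.zero_mem
      simpa using this
    have hfz : 0 < f z := lt_trans hu0 huz
    have hfne : ‖f‖ ≠ 0 := by
      intro h
      rw [norm_eq_zero] at h
      rw [h] at hfz; simp at hfz
    set g := ‖f‖⁻¹ • f with hg
    have hgnorm : ‖g‖ = 1 := by
      have h := norm_smul (‖f‖⁻¹) f
      rw [hg, h, norm_inv, norm_norm, inv_mul_cancel₀ hfne]
    have hgY : ∀ a ∈ Y, g a = 0 := by
      intro a ha
      rw [hg, ContinuousLinearMap.smul_apply, hf0 a ha, smul_zero]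
    obtain ⟨d, hdD, hdg⟩ := hD.exists_dist_lt g (by norm_num : (0:ℝ) < 1/8)
    set x := xc (⟨d, hdD⟩, 7) with hx
    have hx1 : ‖x‖ ≤ 1 := hxc1 _
    have hx2 : ‖d‖ - 1/8 ≤ d x := by
      have h := hxc2 (⟨d, hdD⟩, 7)
      norm_num at h
      rw [hx]
      linarith
    have hxY : x ∈ Y := hYS ⟨_, rfl⟩
    have hdist : ‖g - d‖ < 1/8 := by rwa [← dist_eq_norm]
    have hdnorm : 7/8 ≤ ‖d‖ := by
      have h1 : ‖g‖ - ‖d‖ ≤ ‖g - d‖ := norm_sub_norm_le _ _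
      rw [hgnorm] at h1
      linarith
    have hdx : d x ≤ 1/8 := by
      have h1 : d x - g x = (d - g) x := by
        rw [ContinuousLinearMap.sub_apply]
      have h2 : |(d - g) x| ≤ ‖d - g‖ * ‖x‖ := by
        simpa using (d - g).le_opNorm x
      have h3 : ‖d - g‖ = ‖g - d‖ := norm_sub_rev _ _
      have h4 : ‖d - g‖ * ‖x‖ ≤ 1/8 := by
        rw [h3]
        calc ‖g - d‖ * ‖x‖ ≤ (1/8) * 1 := by
              apply mul_le_mul hdist.le hx1 (norm_nonneg _) (by norm_num)
          _ = 1/8 := by norm_num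
      have h5 := hgY x hxY
      have := le_trans (le_abs_self _) h2
      rw [← h1, h5] at this
      linarith
    linarith
  have hspan : closure ((Submodule.span ℝ S : Submodule ℝ E) : Set E) = Set.univ := by
    apply eq_univ_of_forall
    intro z
    have := hYuniv z
    exact this
  -- rational combinations
  set F : List (ℚ × (↥Dstar × ℕ)) → E :=
    fun l => (l.map (fun t => (t.1 : ℝ) • xc t.2)).sum with hF
  set Dq : Set E := Set.range F with hDq
  have hadd : ∀ a ∈ Dq, ∀ b ∈ Dq, a + b ∈ Dq := by
    rintro a ⟨l1, rfl⟩ b ⟨l2, rfl⟩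
    exact ⟨l1 ++ l2, by simp [hF]⟩
  have hsmul : ∀ (q : ℚ), ∀ a ∈ Dq, (q : ℝ) • a ∈ Dq := by
    rintro q a ⟨l, rfl⟩
    refine ⟨l.map (fun t => (q * t.1, t.2)), ?_⟩
    simp only [hF, List.map_map]
    rw [List.smul_sum, List.map_map]
    congr 1
    apply List.map_congr_left
    intro t _
    simp only [Function.comp_apply, Rat.cast_mul]
    rw [mul_smul]
  have hsub : (↑(Submodule.span ℝ S) : Set E) ⊆ closure Dq := by
    intro v hv
    induction hv using Submodule.span_induction with
    | mem x hx =>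
      apply subset_closure
      obtain ⟨p, rfl⟩ := hx
      exact ⟨[(1, p)], by simp [hF]⟩
    | zero => exact subset_closure ⟨[], by simp [hF]⟩
    | add x y hx hy ihx ihy =>
      exact map_mem_closure₂ continuous_add ihx ihy hadd
    | smul r x hx ih =>
      have hr : r ∈ closure (Set.range ((↑) : ℚ → ℝ)) :=
        (Rat.denseRange_cast (𝕜 := ℝ)) r
      exact map_mem_closure₂ continuous_smul hr ih
        (by rintro _ ⟨q, rfl⟩ b hb; exact hsmul q b hb)
  refine ⟨Dq, ?_, ?_⟩
  · rw [dense_iff_closure_eq]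
    apply eq_univ_of_univ_subset
    calc Set.univ = closure ((Submodule.span ℝ S : Submodule ℝ E) : Set E) := hspan.symm
      _ ⊆ closure (closure Dq) := closure_mono hsub
      _ = closure Dq := closure_closure
  · have hne : Nonempty (↥Dstar) := hD.nonempty.to_subtype
    have h1 : #Dq ≤ #(List (ℚ × (↥Dstar × ℕ))) := Cardinal.mk_range_le
    have h2 : #(List (ℚ × (↥Dstar × ℕ))) = max #(ℚ × (↥Dstar × ℕ)) ℵ₀ :=
      Cardinal.mk_list_eq_max_mk_aleph0 _
    set μ := max #↥Dstar ℵ₀ with hμdef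
    have hμ : ℵ₀ ≤ μ := le_max_right _ _
    have hdμ : #↥Dstar ≤ μ := le_max_left _ _
    have h3 : #(ℚ × (↥Dstar × ℕ)) ≤ μ := by
      calc #(ℚ × (↥Dstar × ℕ)) ≤ ℵ₀ * (#↥Dstar * ℵ₀) := by
            rw [Cardinal.mk_prod, Cardinal.mk_prod]
            simp [Cardinal.mk_denumerable]
        _ ≤ μ * (μ * μ) := mul_le_mul' hμ (mul_le_mul' hdμ hμ)
        _ = μ := by rw [Cardinal.mul_eq_self hμ, Cardinal.mul_eq_self hμ]
    calc #Dq ≤ max #(ℚ × (↥Dstar × ℕ)) ℵ₀ := h1.trans h2.le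
      _ ≤ μ := max_le h3 hμ

end C

section Main
variable {E : Type u} [NormedAddCommGroup E] [NormedSpace ℝ E] [CompleteSpace E]

lemma opNorm_le_of_unit {G : Type*} [NormedAddCommGroup G] [NormedSpace ℝ G]
    (f : E →L[ℝ] G) {C : ℝ} (hC : 0 ≤ C) (h : ∀ x : E, ‖x‖ ≤ 1 → ‖f x‖ ≤ C) : ‖f‖ ≤ C := by
  apply f.opNorm_le_bound' hC
  intro x hx
  have hxpos : 0 < ‖x‖ := lt_of_le_of_ne (norm_nonneg x) (Ne.symm hx)
  have hu : ‖(‖x‖⁻¹ : ℝ) • x‖ = 1 := by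
    rw [norm_smul, norm_inv, norm_norm, inv_mul_cancel₀ hx]
  have := h _ hu.le
  rw [map_smul, norm_smul, norm_inv, norm_norm] at this
  calc ‖f x‖ = ‖x‖ * (‖x‖⁻¹ * ‖f x‖) := by field_simp
    _ ≤ ‖x‖ * C := by
        apply mul_le_mul_of_nonneg_left this (norm_nonneg x)
    _ = C * ‖x‖ := mul_comm _ _

end Main

section Upper
variable {E : Type u} [NormedAddCommGroup E] [NormedSpace ℝ E]
variable (D : Set E) (Dstar : Set (E →L[ℝ] ℝ))

def Compat (ε : ℝ) (T : E →L[ℝ] E) (i : List ↥D × List (↥Dstar × ↥Dstar)) : Prop :=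
  (∀ f h : E →L[ℝ] ℝ, ‖f‖ ≤ 2 → ‖h‖ ≤ 2 → (∀ y ∈ i.1, |f ↑y - h ↑y| ≤ ε/16) →
     ∀ x : E, ‖x‖ ≤ 1 → |f (T x) - h (T x)| ≤ ε/4) ∧
  (∀ p ∈ i.2, ‖(↑p.1 : E →L[ℝ] ℝ)‖ ≤ 2 ∧
     ∀ x : E, ‖x‖ ≤ 1 → |(↑p.1 : E →L[ℝ] ℝ) (T x) - (↑p.2 : E →L[ℝ] ℝ) x| ≤ ε/4) ∧
  (∀ h : E →L[ℝ] ℝ, ‖h‖ ≤ 1 → ∃ p ∈ i.2, ∀ y ∈ i.1, |h ↑y - (↑p.1 : E →L[ℝ] ℝ) ↑y| ≤ ε/16)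

lemma claimA [CompleteSpace E] {ε : ℝ} (hε : 0 < ε) {T S : E →L[ℝ] E}
    {i : List ↥D × List (↥Dstar × ↥Dstar)}
    (hT : Compat D Dstar ε T i) (hS : Compat D Dstar ε S i) : ‖T - S‖ ≤ ε := by
  obtain ⟨hTuc, hTacc, hcov⟩ := hT
  obtain ⟨hSuc, hSacc, -⟩ := hS
  apply opNorm_le_of_unit _ hε.le
  intro x hx
  rw [ContinuousLinearMap.sub_apply]
  have key : ∀ h : E →L[ℝ] ℝ, ‖h‖ ≤ 1 → |h (T x) - h (S x)| ≤ ε := by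
    intro h hh
    obtain ⟨p, hpmem, hpclose⟩ := hcov h hh
    obtain ⟨hp1norm, hpT⟩ := hTacc p hpmem
    obtain ⟨-, hpS⟩ := hSacc p hpmem
    have h1 := hTuc h ↑p.1 (hh.trans one_le_two) hp1norm hpclose x hx
    have h2 := hSuc h ↑p.1 (hh.trans one_le_two) hp1norm hpclose x hx
    have h3 := hpT x hx
    have h4 := hpS x hx
    have e1 : h (T x) - h (S x) =
        (h (T x) - (↑p.1 : E →L[ℝ] ℝ) (T x)) + ((↑p.1 : E →L[ℝ] ℝ) (T x) - (↑p.2 : E →L[ℝ] ℝ) x)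
        + ((↑p.2 : E →L[ℝ] ℝ) x - (↑p.1 : E →L[ℝ] ℝ) (S x))
        + ((↑p.1 : E →L[ℝ] ℝ) (S x) - h (S x)) := by ring
    rw [e1]
    have a1 := abs_add_le (h (T x) - (↑p.1 : E →L[ℝ] ℝ) (T x) + ((↑p.1 : E →L[ℝ] ℝ) (T x) - (↑p.2 : E →L[ℝ] ℝ) x) + ((↑p.2 : E →L[ℝ] ℝ) x - (↑p.1 : E →L[ℝ] ℝ) (S x))) ((↑p.1 : E →L[ℝ] ℝ) (S x) - h (S x))
    have a2 := abs_add_le (h (T x) - (↑p.1 : E →L[ℝ] ℝ) (T x) + ((↑p.1 : E →L[ℝ] ℝ) (T x) - (↑p.2 : E →L[ℝ] ℝ) x)) ((↑p.2 : E →L[ℝ] ℝ) x - (↑p.1 : E →L[ℝ] ℝ) (S x))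
    have a3 := abs_add_le (h (T x) - (↑p.1 : E →L[ℝ] ℝ) (T x)) ((↑p.1 : E →L[ℝ] ℝ) (T x) - (↑p.2 : E →L[ℝ] ℝ) x)
    have r1 : |(↑p.2 : E →L[ℝ] ℝ) x - (↑p.1 : E →L[ℝ] ℝ) (S x)| = |(↑p.1 : E →L[ℝ] ℝ) (S x) - (↑p.2 : E →L[ℝ] ℝ) x| := abs_sub_comm _ _
    have r2 : |(↑p.1 : E →L[ℝ] ℝ) (S x) - h (S x)| = |h (S x) - (↑p.1 : E →L[ℝ] ℝ) (S x)| := abs_sub_comm _ _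
    linarith
  apply NormedSpace.norm_le_dual_bound ℝ _ hε.le
  intro f
  rcases eq_or_ne f 0 with rfl | hf
  · simp
  · have hfn : ‖f‖ ≠ 0 := norm_ne_zero_iff.mpr hf
    have hfpos : 0 < ‖f‖ := lt_of_le_of_ne (norm_nonneg f) (Ne.symm hfn)
    set h : E →L[ℝ] ℝ := ‖f‖⁻¹ • f with hhdef
    have hhnorm : ‖h‖ ≤ 1 := by
      have := norm_smul (‖f‖⁻¹) f
      rw [hhdef, this, norm_inv, norm_norm, inv_mul_cancel₀ hfn]
    have hk := key h hhnorm
    have hexp : h (T x) - h (S x) = ‖f‖⁻¹ * (f (T x) - f (S x)) := by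
      rw [hhdef]
      simp only [ContinuousLinearMap.smul_apply, smul_eq_mul]
      ring
    rw [hexp, abs_mul, abs_inv, abs_norm] at hk
    rw [map_sub, Real.norm_eq_abs]
    calc |f (T x) - f (S x)| = ‖f‖ * (‖f‖⁻¹ * |f (T x) - f (S x)|) := by field_simp
      _ ≤ ‖f‖ * ε := mul_le_mul_of_nonneg_left hk (norm_nonneg f)
      _ = ε * ‖f‖ := mul_comm _ _

lemma claimB (hDd : Dense D) (hDsd : Dense Dstar) {ε : ℝ} (hε : 0 < ε)
    {T : E →L[ℝ] E} (hT : IsCompactOperator T) :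
    ∃ i : List ↥D × List (↥Dstar × ↥Dstar), Compat D Dstar ε T i := by
  classical
  have hT' : IsCompactOperator (⇑(T : E →ₗ[ℝ] E)) := hT
  have hcpt : IsCompact (closure (⇑T '' Metric.closedBall 0 1)) :=
    hT'.isCompact_closure_image_closedBall (𝕜₁ := ℝ) 1
  have htb : TotallyBounded (⇑T '' Metric.closedBall 0 1) :=
    (hcpt.totallyBounded).subset subset_closure
  obtain ⟨t0, ht0fin, ht0cov⟩ := Metric.totallyBounded_iff.mp htb (ε/64) (by positivity)
  choose dap hdap1 hdap2 using fun z : E => hDd.exists_dist_lt z (show (0:ℝ) < ε/64 by positivity)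
  set ys : List ↥D := ht0fin.toFinset.toList.map (fun z => ⟨dap z, hdap1 z⟩) with hysdef
  have hNET : ∀ x : E, ‖x‖ ≤ 1 → ∃ y ∈ ys, ‖T x - ↑y‖ ≤ ε/32 := by
    intro x hx
    have hmem : T x ∈ ⇑T '' Metric.closedBall 0 1 :=
      ⟨x, by simpa [Metric.mem_closedBall, dist_zero_right] using hx, rfl⟩
    have hcov := ht0cov hmem
    rw [Set.mem_iUnion₂] at hcov
    obtain ⟨z, hz, hdz⟩ := hcov
    refine ⟨⟨dap z, hdap1 z⟩, ?_, ?_⟩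
    · exact List.mem_map.mpr ⟨z, Finset.mem_toList.mpr ((Set.Finite.mem_toFinset ht0fin).mpr hz), rfl⟩
    · have d1 : dist (T x) z < ε/64 := by rwa [Metric.mem_ball] at hdz
      have d2 : dist z (dap z) < ε/64 := hdap2 z
      calc ‖T x - (↑(⟨dap z, hdap1 z⟩ : ↥D) : E)‖ = dist (T x) (dap z) := (dist_eq_norm (T x) (dap z)).symm
        _ ≤ dist (T x) z + dist z (dap z) := dist_triangle _ _ _
        _ ≤ ε/32 := by linarith
  have hUC : ∀ f h : E →L[ℝ] ℝ, ‖f‖ ≤ 2 → ‖h‖ ≤ 2 → (∀ y ∈ ys, |f ↑y - h ↑y| ≤ ε/16) →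
      ∀ x : E, ‖x‖ ≤ 1 → |f (T x) - h (T x)| ≤ ε/4 := by
    intro f h hf2 hh2 hclose x hx
    obtain ⟨y, hymem, hyn⟩ := hNET x hx
    have e1 : f (T x) - h (T x) = (f ↑y - h ↑y) + (f - h) (T x - ↑y) := by
      simp only [ContinuousLinearMap.sub_apply, map_sub]; ring
    have b1 : |(f - h) (T x - ↑y)| ≤ ‖f - h‖ * ‖T x - ↑y‖ := by
      simpa [Real.norm_eq_abs] using (f - h).le_opNorm (T x - ↑y)
    have b2 : ‖f - h‖ ≤ 4 := (norm_sub_le f h).trans (by linarith)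
    have b3 : ‖f - h‖ * ‖T x - ↑y‖ ≤ 4 * (ε/32) :=
      mul_le_mul b2 hyn (norm_nonneg _) (by norm_num)
    have b4 := hclose y hymem
    rw [e1]
    have := abs_add_le (f ↑y - h ↑y) ((f - h) (T x - ↑y))
    linarith
  set R : ℝ := (ys.map (fun y : ↥D => ‖(y : E)‖)).sum + 1 with hRdef
  have hsum0 : 0 ≤ (ys.map (fun y : ↥D => ‖(y : E)‖)).sum := List.sum_nonneg (by
    intro a ha; obtain ⟨y, hy, rfl⟩ := List.mem_map.mp ha; exact norm_nonneg _)
  have hR1 : 1 ≤ R := by rw [hRdef]; linarith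
  have hR0 : 0 < R := by linarith
  have hRy : ∀ y ∈ ys, ‖(y : E)‖ ≤ R := by
    intro y hy
    have hmem : ‖(y : E)‖ ∈ ys.map (fun y : ↥D => ‖(y : E)‖) := List.mem_map.mpr ⟨y, hy, rfl⟩
    have hle := List.single_le_sum (l := ys.map (fun y : ↥D => ‖(y : E)‖)) (by
      intro a ha; obtain ⟨y', hy', rfl⟩ := List.mem_map.mp ha; exact norm_nonneg _) _ hmem
    rw [hRdef]; linarith
  set V : Set (Fin ys.length → ℝ) :=
    {v | ∃ h : E →L[ℝ] ℝ, ‖h‖ ≤ 1 ∧ ∀ j : Fin ys.length, v j = h ↑(ys.get j)} with hVdef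
  have hVb : V ⊆ Metric.closedBall 0 R := by
    rintro v ⟨h, hh, hv⟩
    rw [Metric.mem_closedBall, dist_zero_right, pi_norm_le_iff_of_nonneg hR0.le]
    intro j
    rw [hv j, Real.norm_eq_abs]
    have hyR := hRy (ys.get j) (List.get_mem ys j)
    calc |h ↑(ys.get j)| ≤ ‖h‖ * ‖(ys.get j : E)‖ := by
          simpa [Real.norm_eq_abs] using h.le_opNorm (↑(ys.get j) : E)
      _ ≤ 1 * R := mul_le_mul hh hyR (norm_nonneg _) zero_le_one
      _ = R := one_mul R
  have hVtb : TotallyBounded V :=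
    ((isCompact_closedBall (0 : Fin ys.length → ℝ) R).totallyBounded).subset hVb
  obtain ⟨tV, htVsub, htVfin, htVcov⟩ := totallyBounded_iff_subset.mp hVtb
    {p | dist p.1 p.2 < ε/32} (Metric.dist_mem_uniformity (by positivity))
  have hwit : ∀ v ∈ V, ∃ fd : ↥Dstar × ↥Dstar, ‖(↑fd.1 : E →L[ℝ] ℝ)‖ ≤ 2 ∧
      (∀ j : Fin ys.length, |v j - (↑fd.1 : E →L[ℝ] ℝ) ↑(ys.get j)| ≤ ε/32) ∧
      (∀ x : E, ‖x‖ ≤ 1 → |(↑fd.1 : E →L[ℝ] ℝ) (T x) - (↑fd.2 : E →L[ℝ] ℝ) x| ≤ ε/4) := by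
    rintro v ⟨h, hh1, hvj⟩
    have hrpos : 0 < min 1 ((ε/32)/R) := lt_min one_pos (by positivity)
    obtain ⟨f, hfD, hfd⟩ := hDsd.exists_dist_lt h hrpos
    have hdist : ‖h - f‖ < min 1 ((ε/32)/R) := by rwa [← dist_eq_norm]
    have hfnorm : ‖f‖ ≤ 2 := by
      have h2 : ‖f‖ - ‖h‖ ≤ ‖f - h‖ := norm_sub_norm_le f h
      rw [norm_sub_rev] at h2
      have h3 := hdist.le.trans (min_le_left _ _)
      linarith
    have hfy : ∀ j : Fin ys.length, |v j - f ↑(ys.get j)| ≤ ε/32 := by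
      intro j
      rw [hvj j]
      have e : h ↑(ys.get j) - f ↑(ys.get j) = (h - f) ↑(ys.get j) :=
        (ContinuousLinearMap.sub_apply h f _).symm
      have b : |(h - f) ↑(ys.get j)| ≤ ‖h - f‖ * ‖(ys.get j : E)‖ := by
        simpa [Real.norm_eq_abs] using (h - f).le_opNorm (↑(ys.get j) : E)
      have b2 : ‖h - f‖ * ‖(ys.get j : E)‖ ≤ ((ε/32)/R) * R :=
        mul_le_mul (hdist.le.trans (min_le_right _ _)) (hRy _ (List.get_mem ys j))
          (norm_nonneg _) (by positivity)
      have b3 : ((ε/32)/R) * R = ε/32 := div_mul_cancel₀ _ hR0.ne'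
      rw [e]
      linarith
    obtain ⟨d, hdD, hdd⟩ := hDsd.exists_dist_lt (f.comp T) (show (0:ℝ) < ε/4 by positivity)
    have hdx : ∀ x : E, ‖x‖ ≤ 1 → |f (T x) - d x| ≤ ε/4 := by
      intro x hx
      have e : f (T x) - d x = (f.comp T - d) x := by
        simp [ContinuousLinearMap.sub_apply]
      have b : |(f.comp T - d) x| ≤ ‖f.comp T - d‖ * ‖x‖ := by
        simpa [Real.norm_eq_abs] using (f.comp T - d).le_opNorm x
      have hdn : ‖f.comp T - d‖ ≤ ε/4 := by
        rw [← dist_eq_norm]; exact hdd.le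
      have b2 : ‖f.comp T - d‖ * ‖x‖ ≤ (ε/4) * 1 :=
        mul_le_mul hdn hx (norm_nonneg _) (by positivity)
      rw [e]
      linarith
    exact ⟨(⟨f, hfD⟩, ⟨d, hdD⟩), hfnorm, hfy, hdx⟩
  have hDsne : Nonempty ↥Dstar := hDsd.nonempty.to_subtype
  set fdmap : (Fin ys.length → ℝ) → ↥Dstar × ↥Dstar := fun v =>
    if hv : v ∈ V then (hwit v hv).choose else Classical.arbitrary _ with hfdmap
  set ps : List (↥Dstar × ↥Dstar) := htVfin.toFinset.toList.map fdmap with hpsdef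
  refine ⟨(ys, ps), hUC, ?_, ?_⟩
  · intro p hp
    obtain ⟨v, hv, rfl⟩ := List.mem_map.mp hp
    have hvV : v ∈ V := htVsub ((Set.Finite.mem_toFinset htVfin).mp (Finset.mem_toList.mp hv))
    have heq : fdmap v = (hwit v hvV).choose := dif_pos hvV
    have hspec := (hwit v hvV).choose_spec
    rw [heq]
    exact ⟨hspec.1, hspec.2.2⟩
  · intro h hh1
    have hvV : (fun j => h ↑(ys.get j)) ∈ V := ⟨h, hh1, fun j => rfl⟩
    have hcov := htVcov hvV
    rw [Set.mem_iUnion₂] at hcov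
    obtain ⟨w, hw, hdw⟩ := hcov
    have hwV : w ∈ V := htVsub hw
    have heq : fdmap w = (hwit w hwV).choose := dif_pos hwV
    have hspec := (hwit w hwV).choose_spec
    refine ⟨fdmap w, List.mem_map.mpr
      ⟨w, Finset.mem_toList.mpr ((Set.Finite.mem_toFinset htVfin).mpr hw), rfl⟩, ?_⟩
    intro y hy
    obtain ⟨j, hj⟩ := List.mem_iff_get.mp hy
    have c1 : |h ↑y - w j| ≤ ε/32 := by
      have hd := dist_le_pi_dist (fun j => h ↑(ys.get j)) w j
      have hdw' : dist (fun j => h ↑(ys.get j)) w < ε/32 := hdw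
      rw [Real.dist_eq] at hd
      rw [← hj]
      exact (hd.trans hdw'.le)
    have c2 := hspec.2.1 j
    rw [hj] at c2
    rw [heq]
    have := abs_sub_le (h ↑y) (w j) ((((hwit w hwV).choose.1 : ↥Dstar) : E →L[ℝ] ℝ) ↑y)
    linarith

end Upper

/-- Let `E` be a real Banach space and let `λ` be an infinite cardinal equal to the least
cardinality of a dense subset of the continuous dual space `E*` (with the dual norm). Then the
least cardinality of a dense subset of the space `K(E)` of compact operators on `E`, equipped
with the operator norm, is also `λ`. -/
theorem statement9 (E : Type u) [NormedAddCommGroup E] [NormedSpace ℝ E] [CompleteSpace E]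
    (lam : Cardinal.{u}) (hlam : Cardinal.aleph0 ≤ lam)
    (hdual : densityCard (E →L[ℝ] ℝ) = lam) :
    densityCard {f : E →L[ℝ] E // IsCompactOperator f} = lam := by
  classical
  set X := {f : E →L[ℝ] E // IsCompactOperator f} with hX
  -- E is nontrivial
  have hnontriv : Nontrivial E := by
    by_contra h
    have hsub : Subsingleton E := not_nontrivial_iff_subsingleton.mp h
    have hsubd : Subsingleton (E →L[ℝ] ℝ) := ⟨fun f g => by
      ext x; rw [Subsingleton.elim x 0]; simp⟩
    have h1 : densityCard (E →L[ℝ] ℝ) ≤ 1 := by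
      have h2 := densityCard_le (dense_univ : Dense (Set.univ : Set (E →L[ℝ] ℝ)))
      have h3 : #(Set.univ : Set (E →L[ℝ] ℝ)) ≤ 1 := by
        rw [Cardinal.mk_univ]
        exact Cardinal.le_one_iff_subsingleton.mpr hsubd
      exact h2.trans h3
    rw [hdual] at h1
    exact absurd (hlam.trans h1) (by
      intro hh
      exact absurd (lt_of_lt_of_le Cardinal.one_lt_aleph0 hh) (lt_irrefl 1))
  obtain ⟨y0, hy0⟩ := exists_ne (0 : E)
  set u : E := ‖y0‖⁻¹ • y0 with hudef
  have hu : ‖u‖ = 1 := norm_smul_inv_norm (𝕜 := ℝ) hy0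
  have hune : u ≠ 0 := by
    intro h; rw [h, norm_zero] at hu; norm_num at hu
  obtain ⟨g, hg1, hgu⟩ := exists_dual_vector ℝ u (norm_ne_zero_iff.mpr hune)
  have hgu1 : g u = 1 := by rw [hgu, hu]; norm_num
  -- rank one operators are compact
  have hrank1 : ∀ f : E →L[ℝ] ℝ, IsCompactOperator (f.smulRight u) := by
    intro f
    refine ⟨(fun t : ℝ => t • u) '' Metric.closedBall 0 (‖f‖+1), ?_, ?_⟩
    · exact (isCompact_closedBall 0 _).image (continuous_id.smul continuous_const)
    · apply Filter.mem_of_superset (Metric.ball_mem_nhds (0 : E) one_pos)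
      intro x hx
      refine ⟨f x, ?_, rfl⟩
      rw [Metric.mem_closedBall, dist_zero_right, Real.norm_eq_abs]
      have h1 : ‖f x‖ ≤ ‖f‖ * ‖x‖ := f.le_opNorm x
      have h2 : ‖x‖ ≤ 1 := le_of_lt (by rwa [Metric.mem_ball, dist_zero_right] at hx)
      rw [Real.norm_eq_abs] at h1
      nlinarith [norm_nonneg f, norm_nonneg x, abs_nonneg (f x)]
  set Ψ : X → (E →L[ℝ] ℝ) := fun T => g.comp T.1 with hΨ
  have hΨlip : ∀ A B : X, dist (Ψ A) (Ψ B) ≤ dist A B := by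
    intro A B
    rw [dist_eq_norm, Subtype.dist_eq, dist_eq_norm]
    have h1 : Ψ A - Ψ B = g.comp (A.1 - B.1) := by
      rw [hΨ]; simp [ContinuousLinearMap.comp_sub]
    rw [h1]
    calc ‖g.comp (A.1 - B.1)‖ ≤ ‖g‖ * ‖A.1 - B.1‖ := ContinuousLinearMap.opNorm_comp_le _ _
      _ = ‖A.1 - B.1‖ := by rw [hg1, one_mul]
  have hΨrank : ∀ f : E →L[ℝ] ℝ, Ψ ⟨f.smulRight u, hrank1 f⟩ = f := by
    intro f
    ext x
    simp [hΨ, hgu1]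
  -- lower bound
  have hlower : lam ≤ densityCard X := by
    apply le_densityCard
    intro V hV
    have himg : Dense (Ψ '' V) := by
      rw [Metric.dense_iff]
      intro f r hr
      obtain ⟨T', hT'V, hT'd⟩ := hV.exists_dist_lt (⟨f.smulRight u, hrank1 f⟩ : X) hr
      have hlt : dist f (Ψ T') < r := by
        have h := hΨlip (⟨f.smulRight u, hrank1 f⟩ : X) T'
        rw [hΨrank] at h
        exact lt_of_le_of_lt h hT'd
      exact ⟨Ψ T', Metric.mem_ball.mpr (by rwa [dist_comm]), Set.mem_image_of_mem _ hT'V⟩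
    calc lam = densityCard (E →L[ℝ] ℝ) := hdual.symm
      _ ≤ #(Ψ '' V) := densityCard_le himg
      _ ≤ #V := Cardinal.mk_image_le
  -- upper bound
  obtain ⟨Dstar, hDsd, hDsc⟩ := exists_dense_densityCard (E →L[ℝ] ℝ)
  rw [hdual] at hDsc
  obtain ⟨D, hDd, hDc⟩ := exists_small_dense_of_dense_dual Dstar hDsd
  have hDc' : #↥D ≤ lam := hDc.trans (max_le hDsc.le hlam)
  have hDsne : Nonempty ↥Dstar := hDsd.nonempty.to_subtype
  have hDne : Nonempty ↥D := hDd.nonempty.to_subtype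
  set pick : ℕ × (List ↥D × List (↥Dstar × ↥Dstar)) → X := fun ni =>
    if h : ∃ S : X, Compat D Dstar (1/((ni.1 : ℝ)+1)) S.1 ni.2 then h.choose
    else ⟨0, isCompactOperator_zero⟩ with hpick
  set U : Set X := Set.range pick with hU
  have hUdense : Dense U := by
    rw [Metric.dense_iff]
    intro T r hr
    obtain ⟨n, hn⟩ := exists_nat_one_div_lt hr
    have hεpos : 0 < 1/((n:ℝ)+1) := by positivity
    obtain ⟨i, hi⟩ := claimB D Dstar hDd hDsd hεpos T.2
    have hex : ∃ S : X, Compat D Dstar (1/((n:ℝ)+1)) S.1 i := ⟨T, hi⟩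
    have hpc : Compat D Dstar (1/((n:ℝ)+1)) ((pick (n, i)).1) i := by
      have heq : pick (n, i) = hex.choose := by
        rw [hpick]; exact dif_pos hex
      rw [heq]; exact hex.choose_spec
    have hd : dist T (pick (n, i)) < r := by
      have hAB := claimA D Dstar hεpos hi hpc
      rw [Subtype.dist_eq, dist_eq_norm]
      exact lt_of_le_of_lt hAB hn
    exact ⟨pick (n, i), Metric.mem_ball.mpr (by rwa [dist_comm]), Set.mem_range_self _⟩
  have hUcard : #U ≤ lam := by
    have h1 : #U ≤ #(ℕ × (List ↥D × List (↥Dstar × ↥Dstar))) := Cardinal.mk_range_le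
    have hLD : #(List ↥D) ≤ lam := by
      rw [Cardinal.mk_list_eq_max_mk_aleph0]
      exact max_le hDc' hlam
    have hprod : #(↥Dstar × ↥Dstar) ≤ lam := by
      simp only [Cardinal.mk_prod, Cardinal.lift_id]
      calc #↥Dstar * #↥Dstar ≤ lam * lam := mul_le_mul' hDsc.le hDsc.le
        _ = lam := Cardinal.mul_eq_self hlam
    have hLP : #(List (↥Dstar × ↥Dstar)) ≤ lam := by
      rw [Cardinal.mk_list_eq_max_mk_aleph0]
      exact max_le hprod hlam
    have hIcard : #(List ↥D × List (↥Dstar × ↥Dstar)) ≤ lam := by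
      simp only [Cardinal.mk_prod, Cardinal.lift_id]
      calc _ ≤ lam * lam := mul_le_mul' hLD hLP
        _ = lam := Cardinal.mul_eq_self hlam
    have h2 : #(ℕ × (List ↥D × List (↥Dstar × ↥Dstar))) ≤ lam := by
      rw [Cardinal.mk_prod, Cardinal.mk_nat, Cardinal.lift_aleph0, Cardinal.lift_uzero]
      calc ℵ₀ * #(List ↥D × List (↥Dstar × ↥Dstar)) ≤ lam * lam := mul_le_mul' hlam hIcard
        _ = lam := Cardinal.mul_eq_self hlam
    exact h1.trans h2
  exact le_antisymm ((densityCard_le hUdense).trans hUcard) hlower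
end

section
/- Let κ be an infinite cardinal and let (A_i)_{i ∈ I} be a family of unital real Banach algebras, each having a dense subset of cardinality at most κ, such that for distinct i, j ∈ I there is no continuous algebra isomorphism between A_i and A_j. Then the cardinality of I is at most 2^κ. -/
open Cardinal Filter

universe u

lemma key_iso {T B C : Type u} [Ring T] [NormedRing B] [NormedAlgebra ℝ B] [CompleteSpace B]
    [NormedRing C] [NormedAlgebra ℝ C] [CompleteSpace C]
    (f : T →+* B) (g : T →+* C) (hf : DenseRange f) (hg : DenseRange g)
    (h : ∀ t s : T, dist (f t) (f s) = dist (g t) (g s)) :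
    ∃ e : B ≃ₐ[ℝ] C, Continuous e := by
  letI : UniformSpace T := UniformSpace.comap f inferInstance
  have hui_f : IsUniformInducing (⇑f) := ⟨rfl⟩
  have hcomap : (uniformity B).comap (fun p : T × T => (f p.1, f p.2))
      = (uniformity C).comap (fun p : T × T => (g p.1, g p.2)) := by
    rw [PseudoMetricSpace.uniformity_dist, PseudoMetricSpace.uniformity_dist]
    simp only [Filter.comap_iInf, Filter.comap_principal]
    refine iInf_congr fun ε => iInf_congr fun hε => ?_
    congr 1
    ext p
    simp [h]
  have hui_g : IsUniformInducing (⇑g) := ⟨hcomap.symm⟩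
  let pkgB : AbstractCompletion T :=
    ⟨B, f, inferInstance, inferInstance, inferInstance, hui_f, hf⟩
  let pkgC : AbstractCompletion T :=
    ⟨C, g, inferInstance, inferInstance, inferInstance, hui_g, hg⟩
  let e0 : B ≃ᵤ C := pkgB.compareEquiv pkgC
  have hcoe : ∀ t : T, e0 (f t) = g t := fun t => pkgB.compare_coe pkgC t
  have hcont : Continuous e0 := e0.continuous
  have hadd : ∀ x y : B, e0 (x + y) = e0 x + e0 y := by
    refine isClosed_property2 hf ?_ ?_
    · exact isClosed_eq (hcont.comp continuous_add)
        ((hcont.comp continuous_fst).add (hcont.comp continuous_snd))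
    · intro t s
      rw [← map_add, hcoe, hcoe, hcoe, ← map_add]
  have hmul : ∀ x y : B, e0 (x * y) = e0 x * e0 y := by
    refine isClosed_property2 hf ?_ ?_
    · exact isClosed_eq (hcont.comp continuous_mul)
        ((hcont.comp continuous_fst).mul (hcont.comp continuous_snd))
    · intro t s
      rw [← map_mul, hcoe, hcoe, hcoe, ← map_mul]
  have hone : e0 1 = 1 := by
    calc e0 1 = e0 (f 1) := by rw [f.map_one]
    _ = g 1 := hcoe 1
    _ = 1 := g.map_one
  let eadd : B →+ C := AddMonoidHom.mk' e0 (fun x y => hadd x y)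
  have hsmul : ∀ (r : ℝ) (x : B), e0 (r • x) = r • e0 x := fun r x =>
    map_real_smul eadd hcont r x
  refine ⟨{ toFun := e0
            invFun := e0.symm
            left_inv := e0.left_inv
            right_inv := e0.right_inv
            map_mul' := hmul
            map_add' := hadd
            commutes' := fun r => ?_ }, hcont⟩
  show e0 (algebraMap ℝ B r) = algebraMap ℝ C r
  rw [Algebra.algebraMap_eq_smul_one, Algebra.algebraMap_eq_smul_one, hsmul, hone]

/-- Let `κ` be an infinite cardinal and let `(A i)_{i ∈ I}` be a family of unital real Banach
algebras, each having a dense subset of cardinality at most `κ`, such that for distinct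
`i, j ∈ I` there is no continuous algebra isomorphism between `A i` and `A j`. Then the
cardinality of `I` is at most `2 ^ κ`. -/
theorem statement11 (κ : Cardinal.{u}) (hκ : Cardinal.aleph0 ≤ κ)
    (I : Type u) (A : I → Type u)
    [∀ i, NormedRing (A i)] [∀ i, NormedAlgebra ℝ (A i)] [∀ i, CompleteSpace (A i)]
    (hdense : ∀ i, ∃ D : Set (A i), Dense D ∧ #D ≤ κ)
    (hiso : ∀ i j, i ≠ j → ¬∃ e : A i ≃ₐ[ℝ] A j, Continuous e) :
    #I ≤ 2 ^ κ := by
  classical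
  set X := κ.out with hXdef
  have hX : #X = κ := mk_out κ
  have hfun : ∀ i, ∃ f : X → A i, DenseRange f := by
    intro i
    obtain ⟨D, hD, hDκ⟩ := hdense i
    have : Nonempty (A i) := ⟨1⟩
    have hne : D.Nonempty := hD.nonempty
    have hsub : Nonempty ↥D := hne.to_subtype
    obtain ⟨j⟩ : Nonempty (↥D ↪ X) := by
      rw [← Cardinal.le_def, hX]; exact hDκ
    have hsurj : Function.Surjective (Function.invFun j) :=
      Function.invFun_surjective j.injective
    refine ⟨fun x => ((Function.invFun j x : ↥D) : A i), ?_⟩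
    have hr : Set.range (fun x => ((Function.invFun j x : ↥D) : A i)) = D := by
      rw [show (fun x => ((Function.invFun j x : ↥D) : A i))
            = Subtype.val ∘ Function.invFun j from rfl,
        Set.range_comp, hsurj.range_eq, Set.image_univ, Subtype.range_coe]
    unfold DenseRange
    rw [hr]
    exact hD
  let T := FreeAlgebra ℤ X
  let ψ : ∀ i, T →ₐ[ℤ] A i := fun i => FreeAlgebra.lift ℤ ((hfun i).choose)
  have hψ : ∀ i, DenseRange (ψ i) := by
    intro i
    refine Dense.mono ?_ (hfun i).choose_spec
    rintro x ⟨y, rfl⟩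
    exact ⟨FreeAlgebra.ι ℤ y, FreeAlgebra.lift_ι_apply _ _⟩
  let code : I → (T × T → ℝ) := fun i p => dist (ψ i p.1) (ψ i p.2)
  have hinj : Function.Injective code := by
    intro i j hij
    by_contra hne
    exact hiso i j hne (key_iso (ψ i).toRingHom (ψ j).toRingHom (hψ i) (hψ j)
      (fun t s => congrFun hij (t, s)))
  have hT : #T ≤ κ := by
    refine (FreeAlgebra.cardinalMk_le_max_lift ℤ X).trans ?_
    simp only [mk_int, lift_aleph0, lift_uzero, hX]
    exact sup_le (sup_le hκ le_rfl) hκ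
  have hTT : #(T × T) ≤ κ := by
    have this : #(T × T) = #T * #T := by simp [mk_prod]
    rw [this]
    exact (mul_le_mul' hT hT).trans (mul_eq_self hκ).le
  calc #I ≤ #(T × T → ℝ) := mk_le_of_injective hinj
    _ = lift.{u} #ℝ ^ lift.{0} #(T × T) := mk_arrow _ _
    _ = 𝔠 ^ #(T × T) := by rw [mk_real, lift_continuum, lift_uzero]
    _ ≤ 𝔠 ^ κ := power_le_power_left continuum_ne_zero hTT
    _ = (2 ^ ℵ₀) ^ κ := by rw [two_power_aleph0]
    _ = 2 ^ (ℵ₀ * κ) := (power_mul).symm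
    _ = 2 ^ κ := by rw [aleph0_mul_eq hκ]
end

section
/- Let E and F be real Banach spaces, let A₁ be a closed subalgebra of the algebra B(E) of bounded linear operators on E that contains every bounded linear operator on E whose range is finite-dimensional, and let A₂ be a closed subalgebra of B(F) containing every bounded finite-rank operator on F. If A₁ and A₂ are isomorphic as rings, then E and F are isomorphic as Banach spaces, i.e. there exists a continuous linear bijection from E onto F with continuous inverse. -/
open Cardinal

set_option maxHeartbeats 1000000
set_option synthInstance.maxHeartbeats 400000

open Filter Topology ContinuousLinearMap in
private theorem aux_finrank {G : Type*} [NormedAddCommGroup G] [NormedSpace ℝ G]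
    (ξ : G →L[ℝ] ℝ) (x : G) :
    FiniteDimensional ℝ (LinearMap.range ((ξ.smulRight x : G →L[ℝ] G) : G →ₗ[ℝ] G)) := by
  have hle : LinearMap.range ((ξ.smulRight x : G →L[ℝ] G) : G →ₗ[ℝ] G) ≤ Submodule.span ℝ {x} := by
    rintro _ ⟨z, rfl⟩
    exact Submodule.smul_mem _ (ξ z) (Submodule.mem_span_singleton_self x)
  exact Submodule.finiteDimensional_of_le hle

private theorem aux_sep {G : Type*} [NormedAddCommGroup G] [NormedSpace ℝ G]
    (M : Submodule ℝ G) [FiniteDimensional ℝ M] {x : G} (hx : x ∉ M) :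
    ∃ η : G →L[ℝ] ℝ, η x = 1 ∧ ∀ v ∈ M, η v = 0 := by
  obtain ⟨f, u, hfu, hux⟩ := geometric_hahn_banach_closed_point M.convex
    M.closed_of_finiteDimensional hx
  have hM : ∀ v ∈ M, f v = 0 := by
    intro v hv
    by_contra hfv
    have h1 : f (((u + |u| + 1) / f v) • v) < u := hfu _ (M.smul_mem _ hv)
    rw [map_smul, smul_eq_mul, div_mul_cancel₀ _ hfv] at h1
    linarith [abs_nonneg u]
  have h0 : (0:ℝ) < u := by simpa using hfu 0 M.zero_mem
  have hfx : f x ≠ 0 := by intro h; rw [h] at hux; linarith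
  refine ⟨(f x)⁻¹ • f, ?_, fun v hv => ?_⟩
  · simp [inv_mul_cancel₀ hfx]
  · simp [hM v hv]

private theorem aux_coord {G : Type*} [NormedAddCommGroup G] [NormedSpace ℝ G]
    {y₀ : G} (hy₀ : y₀ ≠ 0) (e : G →L[ℝ] G) (he : ∀ z, e z ∈ Submodule.span ℝ {y₀}) :
    ∃ η : G →L[ℝ] ℝ, ∀ z, e z = η z • y₀ := by
  let ι := ContinuousLinearEquiv.toSpanNonzeroSingleton ℝ y₀ hy₀
  have key : ∀ t : ℝ, (ι t : G) = t • y₀ := fun t => rfl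
  refine ⟨(ι.symm : (Submodule.span ℝ {y₀} : Submodule ℝ G) →L[ℝ] ℝ).comp
    (e.codRestrict _ he), fun z => ?_⟩
  have h1 : ι (ι.symm (e.codRestrict _ he z)) = e.codRestrict _ he z :=
    ι.apply_symm_apply _
  have h2 := congrArg (Subtype.val) h1
  rw [key] at h2
  rw [ContinuousLinearMap.comp_apply]
  exact h2.symm

/-- Let `E` and `F` be real Banach spaces, let `A₁` be a closed subalgebra of `B(E)` containing
every bounded linear operator on `E` with finite-dimensional range, and let `A₂` be a closed
subalgebra of `B(F)` containing every bounded finite-rank operator on `F`. If `A₁` and `A₂`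
are isomorphic as rings, then `E` and `F` are isomorphic as Banach spaces. -/
theorem statement13
    (E : Type u) [NormedAddCommGroup E] [NormedSpace ℝ E] [CompleteSpace E]
    (F : Type v) [NormedAddCommGroup F] [NormedSpace ℝ F] [CompleteSpace F]
    (A₁ : NonUnitalSubalgebra ℝ (E →L[ℝ] E)) (A₂ : NonUnitalSubalgebra ℝ (F →L[ℝ] F))
    (h₁closed : IsClosed (A₁ : Set (E →L[ℝ] E)))
    (h₂closed : IsClosed (A₂ : Set (F →L[ℝ] F)))
    (h₁fin : ∀ f : E →L[ℝ] E, FiniteDimensional ℝ (LinearMap.range (f : E →ₗ[ℝ] E)) → f ∈ A₁)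
    (h₂fin : ∀ f : F →L[ℝ] F, FiniteDimensional ℝ (LinearMap.range (f : F →ₗ[ℝ] F)) → f ∈ A₂)
    (hiso : Nonempty (A₁ ≃+* A₂)) :
    Nonempty (E ≃L[ℝ] F) := by
  obtain ⟨φ⟩ := hiso
  have mem₁ : ∀ (ξ : E →L[ℝ] ℝ) (x : E), ξ.smulRight x ∈ A₁ := fun ξ x =>
    h₁fin _ (aux_finrank ξ x)
  have mem₂ : ∀ (η : F →L[ℝ] ℝ) (y : F), η.smulRight y ∈ A₂ := fun η y =>
    h₂fin _ (aux_finrank η y)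
  by_cases hE : ∃ x : E, x ≠ 0
  case neg =>
    push_neg at hE
    have hA1 : ∀ f : E →L[ℝ] E, f = 0 := fun f => by
      ext z; rw [hE z, map_zero]; rfl
    have hSF : ∀ y : F, y = 0 := by
      intro y; by_contra hy
      obtain ⟨g, _, hg⟩ := exists_dual_vector ℝ y (norm_ne_zero_iff.2 hy)
      have hb : g.smulRight y ∈ A₂ := mem₂ _ _
      have h0 : φ.symm ⟨_, hb⟩ = 0 := Subtype.ext (hA1 _)
      have h1 : (⟨g.smulRight y, hb⟩ : A₂) = 0 := by
        rw [← φ.apply_symm_apply ⟨g.smulRight y, hb⟩, h0, map_zero]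
      have h2 := congrArg (fun c : A₂ => (c : F →L[ℝ] F) y) h1
      simp only [ContinuousLinearMap.smulRight_apply, hg] at h2
      rw [show ((0 : A₂) : F →L[ℝ] F) = 0 from rfl] at h2
      simp only [ContinuousLinearMap.zero_apply, smul_eq_zero, norm_eq_zero, or_self] at h2
      rcases h2 with h2 | h2
      · exact hy (norm_eq_zero.1 (by exact_mod_cast h2))
      · exact hy h2
    exact ⟨{ toFun := fun _ => 0, invFun := fun _ => 0,
             map_add' := by intros; simp,
             map_smul' := by intros; simp,
             left_inv := fun x => ((hE _).trans (hE x).symm),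
             right_inv := fun y => ((hSF _).trans (hSF y).symm),
             continuous_toFun := continuous_const,
             continuous_invFun := continuous_const }⟩
  case pos =>
  obtain ⟨x₀, hx₀⟩ := hE
  obtain ⟨g₀, _, hg₀⟩ := exists_dual_vector ℝ x₀ (norm_ne_zero_iff.2 hx₀)
  set ξ₀ : E →L[ℝ] ℝ := ‖x₀‖⁻¹ • g₀ with hξ₀def
  have hξ₀ : ξ₀ x₀ = 1 := by
    simp only [hξ₀def, ContinuousLinearMap.smul_apply, hg₀, smul_eq_mul]
    exact inv_mul_cancel₀ (norm_ne_zero_iff.2 hx₀)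
  set pop : E →L[ℝ] E := ξ₀.smulRight x₀ with hpopdef
  set p : A₁ := ⟨pop, mem₁ _ _⟩ with hpdef
  have hpop2 : pop * pop = pop := by
    ext z
    simp [hpopdef, ContinuousLinearMap.mul_apply, hξ₀, smul_smul, mul_comm]
  have hpp : p * p = p := Subtype.ext hpop2
  set e' : A₂ := φ p with he'def
  set eop : F →L[ℝ] F := (e' : F →L[ℝ] F) with heopdef
  have hee : eop * eop = eop := by
    have h := map_mul φ p p
    rw [hpp] at h
    exact (congrArg Subtype.val h).symm
  have hpne : p ≠ 0 := by
    intro h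
    have h2 := congrArg (fun a : A₁ => (a : E →L[ℝ] E) x₀) h
    simp only [hpdef, hpopdef, ContinuousLinearMap.smulRight_apply, hξ₀, one_smul] at h2
    rw [show ((0 : A₁) : E →L[ℝ] E) = 0 from rfl] at h2
    exact hx₀ (by simpa using h2)
  have hene : e' ≠ 0 := fun h => hpne (by
    have h2 := congrArg φ.symm h
    rwa [he'def, φ.symm_apply_apply, map_zero] at h2)
  obtain ⟨w, hw⟩ : ∃ w, eop w ≠ 0 := by
    by_contra h; push_neg at h
    exact hene (Subtype.ext (ContinuousLinearMap.ext h))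
  set y₀ : F := eop w with hy₀def
  have hy₀ : y₀ ≠ 0 := hw
  have hey₀ : eop y₀ = y₀ := by
    have h := congrArg (fun f : F →L[ℝ] F => f w) hee
    simpa [ContinuousLinearMap.mul_apply] using h
  have pap : ∀ a : E →L[ℝ] E, pop * a * pop = ξ₀ (a x₀) • pop := by
    intro a; ext z
    simp [hpopdef, ContinuousLinearMap.mul_apply, map_smul, smul_smul, mul_comm]
  have hcornermem : ∀ c : A₂, e' * c * e' = φ (p * φ.symm c * p) := by
    intro c
    rw [map_mul, map_mul, φ.apply_symm_apply, ← he'def]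
  have inv_corner : ∀ c : A₂, e' * c * e' ≠ 0 → ∃ g : A₂, g * (e' * c * e') = e' := by
    intro c hc
    set a := φ.symm c with hadef
    set t := ξ₀ ((a : E →L[ℝ] E) x₀) with htdef
    have h1 : p * a * p = t • p := Subtype.ext (pap _)
    have ht : t ≠ 0 := by
      intro h
      apply hc
      rw [hcornermem, h1, h, zero_smul, map_zero]
    refine ⟨φ (t⁻¹ • p), ?_⟩
    rw [hcornermem, h1, ← map_mul]
    rw [smul_mul_assoc, mul_smul_comm, smul_smul, inv_mul_cancel₀ ht, one_smul, hpp, ← he'def]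
  have hrange : ∀ z, eop z ∈ Submodule.span ℝ {y₀} := by
    intro z
    by_contra hz
    have hez : eop z ≠ 0 := fun h => hz (h ▸ Submodule.zero_mem _)
    have hy₀span : y₀ ∉ Submodule.span ℝ {eop z} := by
      intro hmem
      obtain ⟨s, hs⟩ := Submodule.mem_span_singleton.1 hmem
      have hs0 : s ≠ 0 := by rintro rfl; simp only [zero_smul] at hs; exact hy₀ hs.symm
      apply hz
      rw [Submodule.mem_span_singleton]
      exact ⟨s⁻¹, by rw [← hs, smul_smul, inv_mul_cancel₀ hs0, one_smul]⟩
    obtain ⟨η, hη1, hη0⟩ := aux_sep (Submodule.span ℝ {eop z}) hy₀span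
    set c : A₂ := ⟨η.smulRight y₀, mem₂ _ _⟩ with hcdef
    have hval : ((e' * c * e' : A₂) : F →L[ℝ] F) = eop * (η.smulRight y₀) * eop := rfl
    have hc : e' * c * e' ≠ 0 := by
      intro h
      have h2 : (eop * (η.smulRight y₀) * eop) w = 0 := by
        rw [← hval, h]; rfl
      rw [ContinuousLinearMap.mul_apply, ContinuousLinearMap.mul_apply, ← hy₀def] at h2
      simp only [ContinuousLinearMap.smulRight_apply, hη1, one_smul, hey₀] at h2
      exact hy₀ h2
    obtain ⟨gg, hgg⟩ := inv_corner c hc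
    have h3 := congrArg (fun a : A₂ => (a : F →L[ℝ] F) z) hgg
    simp only [MulMemClass.coe_mul, hval, ContinuousLinearMap.mul_apply] at h3
    rw [ContinuousLinearMap.smulRight_apply,
      hη0 (eop z) (Submodule.mem_span_singleton_self _)] at h3
    simp only [zero_smul, map_zero] at h3
    rw [← heopdef] at h3
    exact hez h3.symm
  obtain ⟨η₀, hη₀⟩ := aux_coord hy₀ eop hrange
  have hη₀y₀ : η₀ y₀ = 1 := by
    have h1 : η₀ y₀ • y₀ = (1:ℝ) • y₀ := by rw [← hη₀ y₀, hey₀, one_smul]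
    exact smul_left_injective ℝ hy₀ h1
  have corner_scalar : ∀ c : A₂, e' * c * e' = c →
      (c : F →L[ℝ] F) = η₀ ((c : F →L[ℝ] F) y₀) • eop := by
    intro c hc
    have hc' : (c : F →L[ℝ] F) = eop * (c : F →L[ℝ] F) * eop := (congrArg Subtype.val hc).symm
    ext z
    conv_lhs => rw [hc']
    rw [ContinuousLinearMap.mul_apply, ContinuousLinearMap.mul_apply, hη₀ z, map_smul, map_smul,
      hη₀ ((c : F →L[ℝ] F) y₀)]
    simp [ContinuousLinearMap.smul_apply, hη₀ z, smul_smul, mul_comm]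
  have hptp : ∀ t : ℝ, p * (t • p) * p = t • p := by
    intro t
    rw [mul_smul_comm, smul_mul_assoc, hpp, hpp]
  have hφtp : ∀ t : ℝ, e' * φ (t • p) * e' = φ (t • p) := by
    intro t
    rw [he'def, ← map_mul, ← map_mul, hptp]
  have hscal : ∀ t : ℝ, (φ (t • p) : F →L[ℝ] F)
      = η₀ ((φ (t • p) : F →L[ℝ] F) y₀) • eop :=
    fun t => corner_scalar _ (hφtp t)
  set σ : ℝ → ℝ := fun t => η₀ ((φ (t • p) : F →L[ℝ] F) y₀) with hσdef
  have happ : ∀ t : ℝ, (φ (t • p) : F →L[ℝ] F) y₀ = σ t • y₀ := by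
    intro t
    have h := congrArg (fun f : F →L[ℝ] F => f y₀) (hscal t)
    simpa [ContinuousLinearMap.smul_apply, hey₀] using h
  have hσ1 : σ 1 = 1 := by
    simp only [hσdef, one_smul]
    rw [← he'def, ← heopdef, hey₀, hη₀y₀]
  have hσ0 : σ 0 = 0 := by
    simp only [hσdef, zero_smul, map_zero]
    rw [show ((0 : A₂) : F →L[ℝ] F) = 0 from rfl]
    simp
  have hσadd : ∀ s t, σ (s + t) = σ s + σ t := by
    intro s t
    simp only [hσdef]
    rw [add_smul, map_add]
    rw [show ((φ (s • p) + φ (t • p) : A₂) : F →L[ℝ] F)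
      = (φ (s • p) : F →L[ℝ] F) + (φ (t • p) : F →L[ℝ] F) from rfl]
    rw [ContinuousLinearMap.add_apply, map_add]
  have hσmul : ∀ s t, σ (s * t) = σ s * σ t := by
    intro s t
    have h1 : (s * t) • p = (s • p) * (t • p) := by
      rw [smul_mul_assoc, mul_smul_comm, smul_smul, hpp]
    have h2 : (φ ((s * t) • p) : F →L[ℝ] F) y₀ = (σ s * σ t) • y₀ := by
      rw [h1, map_mul]
      rw [show ((φ (s • p) * φ (t • p) : A₂) : F →L[ℝ] F)
        = (φ (s • p) : F →L[ℝ] F) * (φ (t • p) : F →L[ℝ] F) from rfl]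
      rw [ContinuousLinearMap.mul_apply, happ t, map_smul, happ s, smul_smul, mul_comm]
    have h3 := (happ (s * t)).symm.trans h2
    exact smul_left_injective ℝ hy₀ h3
  have hσid : ∀ t, σ t = t := by
    intro t
    have hsub : RingHom.mk' ⟨⟨σ, hσ1⟩, hσmul⟩ hσadd = RingHom.id ℝ :=
      Subsingleton.elim _ _
    exact congrFun (congrArg DFunLike.coe hsub) t
  have hφval : ∀ t : ℝ, (φ (t • p) : F →L[ℝ] F) = t • eop := by
    intro t
    rw [hscal t]
    congr 1
    exact hσid t
  set α : E → A₁ := fun x => ⟨ξ₀.smulRight x, mem₁ _ _⟩ with hαdef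
  set T : E → F := fun x => (φ (α x) : F →L[ℝ] F) y₀ with hTdef
  have hTadd : ∀ x x', T (x + x') = T x + T x' := by
    intro x x'
    have hαadd : α (x + x') = α x + α x' := by
      apply Subtype.ext
      ext z
      show ξ₀ z • (x + x') = ((ξ₀.smulRight x + ξ₀.smulRight x') : E →L[ℝ] E) z
      simp [smul_add]
    simp only [hTdef]
    rw [hαadd, map_add]
    rfl
  have hTsmul : ∀ (t : ℝ) (x : E), T (t • x) = t • T x := by
    intro t x
    have hαsmul : α (t • x) = α x * (t • p) := by
      apply Subtype.ext
      ext z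
      show ξ₀ z • (t • x) = ((ξ₀.smulRight x) * (t • pop)) z
      simp [hpopdef, ContinuousLinearMap.mul_apply, hξ₀, smul_smul, mul_comm, mul_left_comm]
    simp only [hTdef]
    rw [hαsmul, map_mul]
    rw [show ((φ (α x) * φ (t • p) : A₂) : F →L[ℝ] F)
      = (φ (α x) : F →L[ℝ] F) * (φ (t • p) : F →L[ℝ] F) from rfl]
    rw [ContinuousLinearMap.mul_apply, hφval t]
    rw [ContinuousLinearMap.smul_apply, hey₀, map_smul]
  have hαp : ∀ x : E, α x * p = α x := by
    intro x
    apply Subtype.ext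
    ext z
    show ((ξ₀.smulRight x) * pop) z = ξ₀ z • x
    simp [hpopdef, ContinuousLinearMap.mul_apply, hξ₀, smul_smul, mul_comm]
  have hTinj : ∀ x, T x = 0 → x = 0 := by
    intro x hx
    simp only [hTdef] at hx
    have h1 : φ (α x) * e' = φ (α x) := by rw [he'def, ← map_mul, hαp]
    have h2 : ∀ z, (φ (α x) : F →L[ℝ] F) z = 0 := by
      intro z
      have h4 := congrArg (fun f : A₂ => (f : F →L[ℝ] F) z) h1
      simp only [MulMemClass.coe_mul, ContinuousLinearMap.mul_apply] at h4
      rw [← heopdef] at h4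
      rw [← h4, hη₀ z, map_smul, hx, smul_zero]
    have h5 : φ (α x) = 0 := Subtype.ext (ContinuousLinearMap.ext h2)
    have h6 : α x = 0 := by
      have h7 := congrArg φ.symm h5
      rwa [φ.symm_apply_apply, map_zero] at h7
    have h7 := congrArg (fun a : A₁ => (a : E →L[ℝ] E) x₀) h6
    simp only [hαdef, ContinuousLinearMap.smulRight_apply, hξ₀, one_smul] at h7
    rw [show ((0 : A₁) : E →L[ℝ] E) = 0 from rfl] at h7
    simpa using h7
  have hTsurj : ∀ y : F, ∃ x, T x = y := by
    intro y
    set c : A₂ := ⟨η₀.smulRight y, mem₂ _ _⟩ with hcdef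
    have hce : c * e' = c := by
      apply Subtype.ext
      ext z
      show ((η₀.smulRight y) * eop) z = η₀ z • y
      rw [ContinuousLinearMap.mul_apply, ContinuousLinearMap.smulRight_apply, hη₀ z]
      simp [hη₀y₀, smul_smul]
    set a := φ.symm c with hadef
    have hp' : φ.symm e' = p := by rw [he'def, φ.symm_apply_apply]
    have hap : a * p = a := by
      calc a * p = φ.symm c * φ.symm e' := by rw [hadef, hp']
        _ = φ.symm (c * e') := (map_mul φ.symm c e').symm
        _ = φ.symm c := by rw [hce]
        _ = a := rfl
    refine ⟨(a : E →L[ℝ] E) x₀, ?_⟩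
    have hαx : α ((a : E →L[ℝ] E) x₀) = a := by
      have h8 : α ((a : E →L[ℝ] E) x₀) = a * p := by
        apply Subtype.ext
        ext z
        show ξ₀ z • ((a : E →L[ℝ] E) x₀) = ((a : E →L[ℝ] E) * pop) z
        simp [hpopdef, ContinuousLinearMap.mul_apply, map_smul]
      rw [h8, hap]
    simp only [hTdef]
    rw [hαx, hadef, φ.apply_symm_apply]
    show η₀ y₀ • y = y
    rw [hη₀y₀, one_smul]
  set Tlin : E →ₗ[ℝ] F :=
    { toFun := T, map_add' := hTadd, map_smul' := hTsmul } with hTlindef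
  have hTsub : ∀ x₁ x₂, T (x₁ - x₂) = T x₁ - T x₂ := fun x₁ x₂ => map_sub Tlin x₁ x₂
  have hTinjf : ∀ x₁ x₂, T x₁ = T x₂ → x₁ = x₂ := by
    intro x₁ x₂ h
    have h2 : T (x₁ - x₂) = 0 := by rw [hTsub, h, sub_self]
    exact sub_eq_zero.1 (hTinj _ h2)
  have hintw : ∀ (a : A₁) (z : E), T ((a : E →L[ℝ] E) z) = (φ a : F →L[ℝ] F) (T z) := by
    intro a z
    have hα2 : α ((a : E →L[ℝ] E) z) = a * α z := by
      apply Subtype.ext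
      ext v
      show ξ₀ v • ((a : E →L[ℝ] E) z) = ((a : E →L[ℝ] E) * (ξ₀.smulRight z)) v
      simp [ContinuousLinearMap.mul_apply, map_smul]
    simp only [hTdef]
    rw [hα2, map_mul]
    rfl
  have hTcont : Continuous T := by
    have := Tlin.continuous_of_seq_closed_graph ?_
    · exact this
    intro u x y hu hTy
    show y = Tlin x
    by_contra hne
    have hne' : y ≠ T x := hne
    set d := y - T x with hddef
    have hd : d ≠ 0 := sub_ne_zero.2 hne'
    obtain ⟨g1, _, hg1⟩ := exists_dual_vector ℝ d (norm_ne_zero_iff.2 hd)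
    set η := ‖d‖⁻¹ • g1 with hηdef
    have hηd : η d = 1 := by
      simp only [hηdef, ContinuousLinearMap.smul_apply, hg1, smul_eq_mul]
      exact inv_mul_cancel₀ (norm_ne_zero_iff.2 hd)
    set c : A₂ := ⟨η.smulRight y₀, mem₂ _ _⟩ with hcdef
    set a := φ.symm c with hadef
    obtain ⟨v, hv⟩ := hTsurj y₀
    have hvne : v ≠ 0 := by
      rintro rfl
      have hT0 : T 0 = 0 := by simpa using hTsmul 0 0
      rw [hT0] at hv
      exact hy₀ hv.symm
    have hx0 : Filter.Tendsto (fun n => u n - x) Filter.atTop (nhds 0) := by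
      have h := hu.sub (tendsto_const_nhds (x := x))
      simpa using h
    have hTd : Filter.Tendsto (fun n => T (u n - x)) Filter.atTop (nhds d) := by
      simp only [hTsub]
      exact hTy.sub tendsto_const_nhds
    have hkey : ∀ n, (a : E →L[ℝ] E) (u n - x) = η (T (u n - x)) • v := by
      intro n
      apply hTinjf
      rw [hintw a (u n - x), hadef, φ.apply_symm_apply]
      show (η.smulRight y₀) (T (u n - x)) = T (η (T (u n - x)) • v)
      rw [ContinuousLinearMap.smulRight_apply, hTsmul, hv]
    have h1 : Filter.Tendsto (fun n => (a : E →L[ℝ] E) (u n - x)) Filter.atTop (nhds 0) := by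
      have h := ((a : E →L[ℝ] E).continuous.tendsto 0).comp hx0
      rw [map_zero] at h
      exact h
    have h2 : Filter.Tendsto (fun n => η (T (u n - x)) • v) Filter.atTop (nhds v) := by
      have hηT : Filter.Tendsto (fun n => η (T (u n - x))) Filter.atTop (nhds 1) := by
        have h := (η.continuous.tendsto d).comp hTd
        rw [hηd] at h; exact h
      simpa using hηT.smul_const v
    simp only [hkey] at h1
    exact hvne (tendsto_nhds_unique h2 h1)
  set Tc : E →L[ℝ] F := { toLinearMap := Tlin, cont := hTcont } with hTcdef
  have hker : LinearMap.ker (Tc : E →ₗ[ℝ] F) = ⊥ :=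
    LinearMap.ker_eq_bot'.2 (fun m hm => hTinj m hm)
  have hrangeT : LinearMap.range (Tc : E →ₗ[ℝ] F) = ⊤ :=
    LinearMap.range_eq_top.2 (fun y => hTsurj y)
  exact ⟨ContinuousLinearEquiv.ofBijective Tc hker hrangeT⟩
end

section
/- Let E and F be real Banach spaces. Then E and F are isomorphic as Banach spaces (there exists a continuous linear bijection with continuous inverse) if and only if the rings K(E) and K(F) of compact operators, with composition as multiplication, are isomorphic as rings. -/
open Cardinal

/-- The non-unital ring `K(E)` of compact operators on `E`, with composition as
multiplication. -/
def compactOperators (𝕜 : Type*) [NontriviallyNormedField 𝕜]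
    (E : Type*) [NormedAddCommGroup E] [NormedSpace 𝕜 E] :
    NonUnitalSubalgebra 𝕜 (E →L[𝕜] E) where
  carrier := {f : E →L[𝕜] E | IsCompactOperator f}
  add_mem' := fun hf hg => hf.add hg
  zero_mem' := isCompactOperator_zero
  smul_mem' := fun c _ hf => hf.smul c
  mul_mem' := fun {_ g} hf _ => hf.comp_clm g

theorem isCompactOperator_smulRight' {E : Type*} [NormedAddCommGroup E] [NormedSpace ℝ E]
    {G : Type*} [NormedAddCommGroup G] [NormedSpace ℝ G] (f : E →L[ℝ] ℝ) (x : G) :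
    IsCompactOperator ⇑(f.smulRight x) := by
  refine ⟨(fun c : ℝ => c • x) '' Metric.closedBall 0 ‖f‖,
    (isCompact_closedBall 0 ‖f‖).image (continuous_id.smul continuous_const), ?_⟩
  filter_upwards [Metric.closedBall_mem_nhds (0 : E) one_pos] with z hz
  refine ⟨f z, ?_, by simp⟩
  simp only [Metric.mem_closedBall, dist_zero_right, Real.norm_eq_abs] at *
  calc |f z| = ‖f z‖ := rfl
    _ ≤ ‖f‖ * ‖z‖ := f.le_opNorm z
    _ ≤ ‖f‖ * 1 := by gcongr
    _ = ‖f‖ := mul_one _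

theorem exists_dual_pair {F : Type*} [NormedAddCommGroup F] [NormedSpace ℝ F]
    {y₁ y₂ : F} (h1 : y₁ ≠ 0) (h2 : ∀ c : ℝ, y₂ ≠ c • y₁) :
    ∃ η : F →L[ℝ] ℝ, η y₁ = 0 ∧ η y₂ = 1 := by
  obtain ⟨u, hu⟩ := SeparatingDual.exists_eq_one (R := ℝ) h1
  have hy' : y₂ - u y₂ • y₁ ≠ 0 := fun h => h2 (u y₂) (sub_eq_zero.mp h)
  obtain ⟨w, hw⟩ := SeparatingDual.exists_eq_one (R := ℝ) hy'
  refine ⟨w - (w y₁) • u, by simp [hu], ?_⟩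
  simp only [map_sub, map_smul, smul_eq_mul, hu, mul_one] at hw
  simp only [ContinuousLinearMap.sub_apply, ContinuousLinearMap.smul_apply, smul_eq_mul]
  linarith

section Aux

variable {E : Type*} [NormedAddCommGroup E] [NormedSpace ℝ E]
variable {F : Type*} [NormedAddCommGroup F] [NormedSpace ℝ F]

noncomputable def conjIso (u : E ≃L[ℝ] F) :
    (compactOperators ℝ E) ≃+* (compactOperators ℝ F) where
  toFun a := ⟨(u : E →L[ℝ] F).comp (a.val.comp (u.symm : F →L[ℝ] E)),
    ((a.2.comp_clm (u.symm : F →L[ℝ] E)).continuous_comp u.continuous)⟩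
  invFun b := ⟨(u.symm : F →L[ℝ] E).comp (b.val.comp (u : E →L[ℝ] F)),
    ((b.2.comp_clm (u : E →L[ℝ] F)).continuous_comp u.symm.continuous)⟩
  left_inv a := by ext z; simp
  right_inv b := by ext z; simp
  map_mul' a b := by ext z; simp
  map_add' a b := by ext z; simp

theorem subsingleton_K (h : Subsingleton E) : Subsingleton (compactOperators ℝ E) := by
  constructor
  intro a b
  apply Subtype.ext
  ext z
  exact Subsingleton.elim _ _

theorem subsingleton_of_K (h : Subsingleton (compactOperators ℝ F)) : Subsingleton F := by
  by_contra hF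
  have : Nontrivial F := not_subsingleton_iff_nontrivial.mp hF
  obtain ⟨y, hy⟩ := exists_ne (0 : F)
  obtain ⟨g, hg⟩ := SeparatingDual.exists_eq_one (R := ℝ) hy
  have h0 : (⟨g.smulRight y, isCompactOperator_smulRight' g y⟩ : compactOperators ℝ F) = 0 :=
    Subsingleton.elim _ _
  have := congrArg (fun a : compactOperators ℝ F => a.val y) h0
  simp [hg] at this
  exact hy this

noncomputable def zeroEquiv (hE : Subsingleton E) (hF : Subsingleton F) : E ≃L[ℝ] F where
  toLinearEquiv :=
    { toFun := fun _ => 0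
      invFun := fun _ => 0
      map_add' := by simp
      map_smul' := by simp
      left_inv := fun x => Subsingleton.elim _ _
      right_inv := fun y => Subsingleton.elim _ _ }
  continuous_toFun := continuous_const
  continuous_invFun := continuous_const

end Aux

section Key

variable {E : Type*} [NormedAddCommGroup E] [NormedSpace ℝ E]
variable {F : Type*} [NormedAddCommGroup F] [NormedSpace ℝ F]

set_option maxHeartbeats 1000000 in
set_option synthInstance.maxHeartbeats 200000 in
theorem key [CompleteSpace E] [CompleteSpace F] [Nontrivial E]
    (φ : (compactOperators ℝ E) ≃+* (compactOperators ℝ F)) : Nonempty (E ≃L[ℝ] F) := by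
  classical
  obtain ⟨x₀, hx₀⟩ := exists_ne (0 : E)
  obtain ⟨f₀, hf₀⟩ := SeparatingDual.exists_eq_one (R := ℝ) hx₀
  set e : compactOperators ℝ E := ⟨f₀.smulRight x₀, isCompactOperator_smulRight' _ _⟩ with he_def
  set eS : ℝ → compactOperators ℝ E :=
    fun lam => ⟨lam • (f₀.smulRight x₀ : E →L[ℝ] E),
      (isCompactOperator_smulRight' f₀ x₀).smul lam⟩ with heS_def
  have he2 : e * e = e := by
    apply Subtype.ext; ext z
    show (f₀.smulRight x₀) ((f₀.smulRight x₀) z) = (f₀.smulRight x₀) z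
    simp [hf₀, smul_smul]
  have hcornerE : ∀ c : compactOperators ℝ E, e * c * e = eS (f₀ (c.val x₀)) := by
    intro c
    apply Subtype.ext; ext z
    show (f₀.smulRight x₀) (c.val ((f₀.smulRight x₀) z))
        = (f₀ (c.val x₀) • (f₀.smulRight x₀ : E →L[ℝ] E)) z
    simp [smul_smul, mul_comm]
  have hmulE : ∀ r s : ℝ, eS r * eS s = eS (r * s) := by
    intro r s
    apply Subtype.ext; ext z
    show (r • (f₀.smulRight x₀ : E →L[ℝ] E)) ((s • (f₀.smulRight x₀ : E →L[ℝ] E)) z)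
        = ((r * s) • (f₀.smulRight x₀ : E →L[ℝ] E)) z
    simp [hf₀, smul_smul, mul_comm, mul_assoc, mul_left_comm]
  have hcommE : ∀ c d : compactOperators ℝ E,
      (e*c*e) * (e*d*e) = (e*d*e) * (e*c*e) := by
    intro c d
    rw [hcornerE c, hcornerE d, hmulE, hmulE, mul_comm]
  set e' : compactOperators ℝ F := φ e with he'def
  have he'2 : e' * e' = e' := by rw [he'def, ← map_mul, he2]
  have heval : e.val x₀ = x₀ := by
    show f₀ x₀ • x₀ = x₀; rw [hf₀, one_smul]
  have he'ne : e'.val ≠ 0 := by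
    intro h
    have h1 : e' = 0 := Subtype.ext h
    have h2 : e = 0 := φ.injective (by rw [← he'def, h1, map_zero])
    have h3 := congrArg (fun t : compactOperators ℝ E => t.val x₀) h2
    simp only [heval] at h3
    exact hx₀ h3
  obtain ⟨z₀, hz₀⟩ := DFunLike.ne_iff.mp he'ne
  set y₀ : F := e'.val z₀ with hy₀def
  have hy₀ : y₀ ≠ 0 := by simpa using hz₀
  have hfix : e'.val y₀ = y₀ := by
    have : (e' * e').val z₀ = e'.val z₀ := by rw [he'2]
    exact this
  have hcommF : ∀ a b : compactOperators ℝ F,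
      (e'*a*e') * (e'*b*e') = (e'*b*e') * (e'*a*e') := by
    intro a b
    have h := congrArg φ (hcommE (φ.symm a) (φ.symm b))
    simp only [map_mul, RingEquiv.apply_symm_apply, ← he'def] at h
    exact h
  have hrank1 : ∀ z : F, ∃ c : ℝ, e'.val z = c • y₀ := by
    by_contra hcon
    push_neg at hcon
    obtain ⟨z₁, hz₁⟩ := hcon
    set y₂ : F := e'.val z₁ with hy₂def
    have hy₂fix : e'.val y₂ = y₂ := by
      have : (e' * e').val z₁ = e'.val z₁ := by rw [he'2]
      exact this
    have h2 : ∀ c : ℝ, y₂ ≠ c • y₀ := hz₁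
    have hy₂ne : y₂ ≠ 0 := by
      intro h; exact h2 0 (by rw [h, zero_smul])
    have h2' : ∀ c : ℝ, y₀ ≠ c • y₂ := by
      intro c h
      rcases eq_or_ne c 0 with rfl | hc
      · rw [zero_smul] at h; exact hy₀ h
      · exact h2 c⁻¹ (by rw [h, smul_smul, inv_mul_cancel₀ hc, one_smul])
    obtain ⟨η₂, hη₂1, hη₂2⟩ := exists_dual_pair hy₀ h2
    obtain ⟨η₁, hη₁2, hη₁1⟩ := exists_dual_pair hy₂ne h2'
    set a : compactOperators ℝ F := ⟨η₂.smulRight y₀, isCompactOperator_smulRight' _ _⟩ with ha_def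
    set b : compactOperators ℝ F := ⟨η₁.smulRight y₂, isCompactOperator_smulRight' _ _⟩ with hb_def
    have ha_app : ∀ w, (e'*a*e').val w = η₂ (e'.val w) • y₀ := by
      intro w
      show e'.val ((η₂.smulRight y₀) (e'.val w)) = η₂ (e'.val w) • y₀
      rw [ContinuousLinearMap.smulRight_apply, map_smul, hfix]
    have hb_app : ∀ w, (e'*b*e').val w = η₁ (e'.val w) • y₂ := by
      intro w
      show e'.val ((η₁.smulRight y₂) (e'.val w)) = η₁ (e'.val w) • y₂
      rw [ContinuousLinearMap.smulRight_apply, map_smul, hy₂fix]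
    have h1 : (e'*b*e').val y₀ = y₂ := by rw [hb_app, hfix, hη₁1, one_smul]
    have h3 : (e'*a*e').val y₂ = y₀ := by rw [ha_app, hy₂fix, hη₂2, one_smul]
    have h4 : (e'*a*e').val y₀ = 0 := by rw [ha_app, hfix, hη₂1, zero_smul]
    have hlhs : ((e'*a*e') * (e'*b*e')).val y₀ = y₀ := by
      show (e'*a*e').val ((e'*b*e').val y₀) = y₀
      rw [h1, h3]
    have hrhs : ((e'*b*e') * (e'*a*e')).val y₀ = 0 := by
      show (e'*b*e').val ((e'*a*e').val y₀) = 0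
      rw [h4, map_zero]
    have := congrArg (fun t : compactOperators ℝ F => t.val y₀) (hcommF a b)
    simp only [hlhs, hrhs] at this
    exact hy₀ this
  obtain ⟨h₀, hh₀⟩ := SeparatingDual.exists_eq_one (R := ℝ) hy₀
  set g₀ : F →L[ℝ] ℝ := h₀.comp e'.val with hg₀def
  have hg₀ : ∀ z, e'.val z = g₀ z • y₀ := by
    intro z
    obtain ⟨c, hc⟩ := hrank1 z
    have hval : g₀ z = c := by
      show h₀ (e'.val z) = c
      rw [hc, map_smul, hh₀, smul_eq_mul, mul_one]
    rw [hval, hc]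
  have hg₀y₀ : g₀ y₀ = 1 := by
    show h₀ (e'.val y₀) = 1
    rw [hfix, hh₀]
  have hy₀cancel : ∀ c d : ℝ, c • y₀ = d • y₀ → c = d := by
    intro c d h
    have := congrArg h₀ h
    simpa [hh₀] using this
  set e'S : ℝ → compactOperators ℝ F :=
    fun lam => ⟨lam • (e'.val : F →L[ℝ] F), e'.2.smul lam⟩ with he'S_def
  have he'Sval : ∀ (lam : ℝ) (z : F), (e'S lam).val z = (lam * g₀ z) • y₀ := by
    intro lam z
    show lam • e'.val z = (lam * g₀ z) • y₀
    rw [hg₀ z, smul_smul]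
  have hcornerF : ∀ b : compactOperators ℝ F, e' * b * e' = e'S (g₀ (b.val y₀)) := by
    intro b
    apply Subtype.ext; ext z
    show e'.val (b.val (e'.val z)) = (g₀ (b.val y₀) • (e'.val : F →L[ℝ] F)) z
    rw [ContinuousLinearMap.smul_apply, hg₀ z, map_smul, map_smul, hg₀ (b.val y₀)]
    exact smul_comm _ _ _
  have hmulF : ∀ r s : ℝ, e'S r * e'S s = e'S (r * s) := by
    intro r s
    apply Subtype.ext; ext z
    show (r • (e'.val : F →L[ℝ] F)) ((s • (e'.val : F →L[ℝ] F)) z)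
        = ((r * s) • (e'.val : F →L[ℝ] F)) z
    rw [ContinuousLinearMap.smul_apply, ContinuousLinearMap.smul_apply,
      ContinuousLinearMap.smul_apply, map_smul, smul_smul]
    congr 1
    show (e' * e').val z = e'.val z
    rw [he'2]
  have hsmul_e : ∀ lam : ℝ, e * eS lam * e = eS lam := by
    intro lam
    apply Subtype.ext; ext z
    show (f₀.smulRight x₀) ((lam • (f₀.smulRight x₀ : E →L[ℝ] E)) ((f₀.smulRight x₀) z))
        = (lam • (f₀.smulRight x₀ : E →L[ℝ] E)) z
    simp [hf₀, smul_smul, mul_comm]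
  have hφS0 : ∀ lam : ℝ, φ (eS lam) = e'S (g₀ ((φ (eS lam)).val y₀)) := by
    intro lam
    conv_lhs => rw [← hsmul_e lam]
    rw [map_mul, map_mul, ← he'def]
    exact hcornerF _
  have he'Sy₀ : ∀ c : ℝ, g₀ ((e'S c).val y₀) = c := by
    intro c
    rw [he'Sval c y₀, map_smul, hg₀y₀, smul_eq_mul, mul_one, mul_one]
  have heS1 : eS 1 = e := by
    apply Subtype.ext
    show (1:ℝ) • (f₀.smulRight x₀ : E →L[ℝ] E) = f₀.smulRight x₀
    rw [one_smul]
  have heSadd : ∀ lam mu : ℝ, eS (lam + mu) = eS lam + eS mu := by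
    intro lam mu
    apply Subtype.ext
    show (lam + mu) • (f₀.smulRight x₀ : E →L[ℝ] E)
        = lam • (f₀.smulRight x₀ : E →L[ℝ] E) + mu • (f₀.smulRight x₀ : E →L[ℝ] E)
    rw [add_smul]
  have heS0 : eS 0 = 0 := by
    apply Subtype.ext
    show (0:ℝ) • (f₀.smulRight x₀ : E →L[ℝ] E) = 0
    rw [zero_smul]
  have hψ1 : g₀ ((φ (eS 1)).val y₀) = 1 := by
    rw [heS1, ← he'def]
    show g₀ (e'.val y₀) = 1
    rw [hfix, hg₀y₀]
  have hψm : ∀ lam mu : ℝ, g₀ ((φ (eS (lam * mu))).val y₀)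
      = g₀ ((φ (eS lam)).val y₀) * g₀ ((φ (eS mu)).val y₀) := by
    intro lam mu
    rw [← hmulE, map_mul, hφS0 lam, hφS0 mu, hmulF]
    simp only [he'Sy₀]
  have hψz : g₀ ((φ (eS 0)).val y₀) = 0 := by
    rw [heS0, map_zero]
    show g₀ ((0 : F →L[ℝ] F) y₀) = 0
    rw [ContinuousLinearMap.zero_apply, map_zero]
  have hψa : ∀ lam mu : ℝ, g₀ ((φ (eS (lam + mu))).val y₀)
      = g₀ ((φ (eS lam)).val y₀) + g₀ ((φ (eS mu)).val y₀) := by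
    intro lam mu
    rw [heSadd]
    rw [map_add φ (eS lam) (eS mu)]
    show g₀ ((φ (eS lam)).val y₀ + (φ (eS mu)).val y₀) = _
    rw [map_add]
  let ψ : ℝ →+* ℝ :=
    { toFun := fun lam => g₀ ((φ (eS lam)).val y₀)
      map_one' := hψ1
      map_mul' := hψm
      map_zero' := hψz
      map_add' := hψa }
  have hψid : ∀ lam : ℝ, ψ lam = lam :=
    fun lam => RingHom.congr_fun (Subsingleton.elim ψ (RingHom.id ℝ)) lam
  have hφS : ∀ lam : ℝ, φ (eS lam) = e'S lam := by
    intro lam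
    rw [hφS0 lam]
    congr 1
    exact hψid lam
  -- the map T
  set opx : E → (compactOperators ℝ E) :=
    fun x => ⟨f₀.smulRight x, isCompactOperator_smulRight' _ _⟩ with hopx_def
  set Tfun : E → F := fun x => (φ (opx x)).val y₀ with hTfun_def
  have hopx_e : ∀ x, opx x * e = opx x := by
    intro x
    apply Subtype.ext; ext z
    show (f₀.smulRight x) ((f₀.smulRight x₀) z) = (f₀.smulRight x) z
    simp [hf₀, smul_smul, mul_comm]
  have hTrep : ∀ x, ∀ z, (φ (opx x)).val z = g₀ z • Tfun x := by
    intro x z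
    conv_lhs => rw [← hopx_e x]
    rw [map_mul, ← he'def]
    show (φ (opx x)).val (e'.val z) = _
    rw [hg₀ z, map_smul]
  have hTadd : ∀ x y, Tfun (x + y) = Tfun x + Tfun y := by
    intro x y
    have h : opx (x + y) = opx x + opx y := by
      apply Subtype.ext; ext z
      show (f₀.smulRight (x + y)) z = (f₀.smulRight x + f₀.smulRight y) z
      simp [smul_add]
    show (φ (opx (x + y))).val y₀ = (φ (opx x)).val y₀ + (φ (opx y)).val y₀
    rw [h, map_add]
    rfl
  have hTsmul : ∀ (c : ℝ) (x : E), Tfun (c • x) = c • Tfun x := by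
    intro c x
    have h : opx (c • x) = opx x * eS c := by
      apply Subtype.ext; ext z
      show (f₀.smulRight (c • x)) z = (f₀.smulRight x) ((c • (f₀.smulRight x₀ : E →L[ℝ] E)) z)
      simp [hf₀, smul_smul, mul_comm]
    show (φ (opx (c • x))).val y₀ = c • (φ (opx x)).val y₀
    rw [h, map_mul, hφS]
    show (φ (opx x)).val ((c • (e'.val : F →L[ℝ] F)) y₀) = _
    rw [ContinuousLinearMap.smul_apply, hfix, map_smul]
  have hT0 : ∀ x, Tfun x = 0 → x = 0 := by
    intro x hx
    have h2 : φ (opx x) = 0 := by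
      apply Subtype.ext; ext z
      rw [hTrep x z, hx, smul_zero]
      rfl
    have h3 : opx x = 0 := φ.injective (by rw [h2, map_zero])
    have h4 : (opx x).val x₀ = 0 := by rw [h3]; rfl
    have h5 : (f₀.smulRight x) x₀ = 0 := h4
    rw [ContinuousLinearMap.smulRight_apply, hf₀, one_smul] at h5
    exact h5
  have hTsurj : ∀ y : F, ∃ x, Tfun x = y := by
    intro y
    set b : compactOperators ℝ E :=
      φ.symm ⟨g₀.smulRight y, isCompactOperator_smulRight' _ _⟩ with hb_def
    refine ⟨b.val x₀, ?_⟩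
    have h1 : (⟨g₀.smulRight y, isCompactOperator_smulRight' _ _⟩ : compactOperators ℝ F) * e'
        = ⟨g₀.smulRight y, isCompactOperator_smulRight' _ _⟩ := by
      apply Subtype.ext; ext z
      show (g₀.smulRight y) (e'.val z) = (g₀.smulRight y) z
      rw [ContinuousLinearMap.smulRight_apply, ContinuousLinearMap.smulRight_apply, hg₀ z,
        map_smul, hg₀y₀, smul_eq_mul, mul_one]
    have h2 : b * e = b := by
      have h := congrArg φ.symm h1
      rw [map_mul, he'def, RingEquiv.symm_apply_apply, ← hb_def] at h
      exact h
    have h3 : opx (b.val x₀) = b * e := by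
      apply Subtype.ext; ext z
      show f₀ z • (b.val x₀) = b.val ((f₀.smulRight x₀) z)
      rw [ContinuousLinearMap.smulRight_apply, map_smul]
    rw [h2] at h3
    show (φ (opx (b.val x₀))).val y₀ = y
    rw [h3, hb_def, RingEquiv.apply_symm_apply]
    show (g₀.smulRight y) y₀ = y
    rw [ContinuousLinearMap.smulRight_apply, hg₀y₀, one_smul]
  have hdual : ∀ h : F →L[ℝ] ℝ, ∃ g : E →L[ℝ] ℝ, ∀ x, h (Tfun x) = g x := by
    intro h
    set c : compactOperators ℝ E :=
      φ.symm ⟨h.smulRight y₀, isCompactOperator_smulRight' _ _⟩ with hc_def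
    refine ⟨f₀.comp c.val, ?_⟩
    intro x
    have hA : e' * (⟨h.smulRight y₀, isCompactOperator_smulRight' _ _⟩ : compactOperators ℝ F)
        = ⟨h.smulRight y₀, isCompactOperator_smulRight' _ _⟩ := by
      apply Subtype.ext; ext z
      show e'.val ((h.smulRight y₀) z) = (h.smulRight y₀) z
      rw [ContinuousLinearMap.smulRight_apply, map_smul, hfix]
    have hB : e * c = c := by
      have hh := congrArg φ.symm hA
      rw [map_mul, he'def, RingEquiv.symm_apply_apply, ← hc_def] at hh
      exact hh
    have hC : (⟨(f₀.comp c.val).smulRight x₀, isCompactOperator_smulRight' _ _⟩ :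
        compactOperators ℝ E) = e * c := by
      apply Subtype.ext; ext z
      show (f₀ (c.val z)) • x₀ = (f₀.smulRight x₀) (c.val z)
      rw [ContinuousLinearMap.smulRight_apply]
    rw [hB] at hC
    have hpair : (⟨(f₀.comp c.val).smulRight x₀, isCompactOperator_smulRight' _ _⟩ :
        compactOperators ℝ E) * opx x = eS ((f₀.comp c.val) x) := by
      apply Subtype.ext; ext z
      show ((f₀.comp c.val).smulRight x₀) ((f₀.smulRight x) z)
          = (((f₀.comp c.val) x) • (f₀.smulRight x₀ : E →L[ℝ] E)) z
      simp [smul_smul, mul_comm]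
    rw [hC] at hpair
    have hφc : φ c = ⟨h.smulRight y₀, isCompactOperator_smulRight' _ _⟩ := by
      rw [hc_def, RingEquiv.apply_symm_apply]
    have hD := congrArg φ hpair
    rw [map_mul, hφS, hφc] at hD
    have hE := congrArg (fun t : compactOperators ℝ F => t.val y₀) hD
    have hL : ((⟨h.smulRight y₀, isCompactOperator_smulRight' _ _⟩ : compactOperators ℝ F)
        * φ (opx x)).val y₀ = h (Tfun x) • y₀ := by
      show (h.smulRight y₀) ((φ (opx x)).val y₀) = _
      rw [ContinuousLinearMap.smulRight_apply]
    have hR : (e'S ((f₀.comp c.val) x)).val y₀ = ((f₀.comp c.val) x) • y₀ := by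
      show ((f₀.comp c.val) x) • e'.val y₀ = _
      rw [hfix]
    simp only [hL, hR] at hE
    exact hy₀cancel _ _ hE
  let Tlin : E →ₗ[ℝ] F :=
    { toFun := Tfun
      map_add' := hTadd
      map_smul' := hTsmul }
  have hcont : Continuous Tfun := by
    have : Continuous Tlin := by
      apply Tlin.continuous_of_seq_closed_graph
      intro u x y hu hTu
      by_contra hne
      obtain ⟨h, hh⟩ := SeparatingDual.exists_separating_of_ne (R := ℝ) hne
      obtain ⟨g, hg⟩ := hdual h
      have l1 : Filter.Tendsto (fun n => h (Tfun (u n))) Filter.atTop (nhds (h y)) :=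
        (h.continuous.tendsto y).comp hTu
      have l2 : Filter.Tendsto (fun n => h (Tfun (u n))) Filter.atTop (nhds (g x)) := by
        have : (fun n => h (Tfun (u n))) = fun n => g (u n) := funext fun n => hg (u n)
        rw [this]
        exact (g.continuous.tendsto x).comp hu
      have hyx : h y = g x := tendsto_nhds_unique l1 l2
      exact hh (by rw [hyx, ← hg x]; rfl)
    exact this
  let TL : E →L[ℝ] F := ⟨Tlin, hcont⟩
  have hker : LinearMap.ker (TL : E →ₗ[ℝ] F) = ⊥ := by
    apply LinearMap.ker_eq_bot'.mpr
    intro x hx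
    exact hT0 x hx
  have hrange : LinearMap.range (TL : E →ₗ[ℝ] F) = ⊤ := by
    apply LinearMap.range_eq_top.mpr
    intro y
    obtain ⟨x, hx⟩ := hTsurj y
    exact ⟨x, hx⟩
  exact ⟨ContinuousLinearEquiv.ofBijective TL hker hrange⟩

end Key

/-- Let `E` and `F` be real Banach spaces. Then `E` and `F` are isomorphic as Banach spaces
(there is a continuous linear bijection with continuous inverse between them) if and only if
the rings `K(E)` and `K(F)` of compact operators, with composition as multiplication, are
isomorphic as rings. -/
theorem statement14
    (E : Type u) [NormedAddCommGroup E] [NormedSpace ℝ E] [CompleteSpace E]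
    (F : Type v) [NormedAddCommGroup F] [NormedSpace ℝ F] [CompleteSpace F] :
    Nonempty (E ≃L[ℝ] F) ↔
      Nonempty ((compactOperators ℝ E) ≃+* (compactOperators ℝ F)) := by
  constructor
  · rintro ⟨u⟩
    exact ⟨conjIso u⟩
  · rintro ⟨φ⟩
    rcases subsingleton_or_nontrivial E with hE | hE
    · have hKE : Subsingleton (compactOperators ℝ E) := subsingleton_K hE
      have hKF : Subsingleton (compactOperators ℝ F) := φ.symm.toEquiv.subsingleton
      exact ⟨zeroEquiv hE (subsingleton_of_K hKF)⟩
    · exact key φ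
end

section
/- For every ordinal α, the continuous dual space of the Banach space C([0,α],ℝ) is isometrically isomorphic to ℓ¹([0,α]), the Banach space of absolutely summable real-valued families indexed by the set of ordinals ≤ α, with the ℓ¹-norm. -/
open Set Order Filter Topology
open scoped ENNReal
set_option linter.unusedSectionVars false
set_option maxHeartbeats 1000000

section Dual
variable {K : Type*} [LinearOrder K] [TopologicalSpace K] [OrderTopology K]
  [OrderBot K] [OrderTop K] [SuccOrder K] [CompactSpace K]

lemma isClopen_Iic' (γ : K) : IsClopen (Set.Iic γ) := by
  constructor
  · exact isClosed_Iic
  · rcases eq_or_ne γ ⊤ with rfl | h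
    · rw [Set.Iic_top]; exact isOpen_univ
    · have : ¬ IsMax γ := fun hm => h (hm.eq_top)
      rw [← Order.Iio_succ_of_not_isMax this]
      exact isOpen_Iio

/-- indicator of `Iic γ` as a continuous map -/
noncomputable def eK (γ : K) : C(K, ℝ) :=
  ⟨(Set.Iic γ).indicator 1, continuous_indicator (by simp [(isClopen_Iic' γ).frontier_eq]) <|
    continuous_const.continuousOn⟩

lemma eK_apply (γ x : K) : eK γ x = if x ≤ γ then 1 else 0 := by
  simp [eK, Set.indicator_apply]

lemma eK_top : (eK ⊤ : C(K, ℝ)) = 1 := by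
  ext x; simp [eK_apply]

lemma eK_mul (γ δ : K) : (eK γ : C(K,ℝ)) * eK δ = eK (min γ δ) := by
  ext x
  simp only [ContinuousMap.mul_apply, eK_apply, le_min_iff]
  by_cases h1 : x ≤ γ <;> by_cases h2 : x ≤ δ <;> simp [h1, h2]

/-- generalized interval indicator: `eI a b` is the indicator of `{x | a < x ≤ b}`
where `a : WithBot K`. -/
noncomputable def eI (a : WithBot K) (b : K) : C(K, ℝ) :=
  eK b - (a.map eK).getD 0

lemma eI_bot (b : K) : eI (⊥ : WithBot K) b = eK b := by
  show eK b - Option.getD none 0 = eK b; simp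

lemma eI_coe (a b : K) : eI (↑a) b = eK b - eK a := by
  show eK b - Option.getD (Option.map eK (some a)) 0 = _; simp

lemma eI_apply (a : WithBot K) (b : K) (x : K) (hab : a < (b : WithBot K)) :
    eI a b x = if (a < (x : WithBot K) ∧ x ≤ b) then 1 else 0 := by
  induction a with
  | bot => simp [eI_bot, eK_apply, WithBot.bot_lt_coe]
  | coe a =>
      rw [eI_coe]
      simp only [ContinuousMap.sub_apply, eK_apply, WithBot.coe_lt_coe]
      rw [WithBot.coe_lt_coe] at hab
      by_cases h1 : x ≤ b <;> by_cases h2 : x ≤ a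
      · simp [h1, h2, not_lt.2 h2]
      · simp [h1, h2, not_le.1 h2]
      · exact absurd (h2.trans hab.le) h1
      · simp [h1, h2]

lemma abs_sum_le_one' {ι : Type*} (F : Finset ι) (c : ι → ℝ)
    (h1 : ∀ i ∈ F, |c i| ≤ 1)
    (h0 : ∀ i ∈ F, ∀ j ∈ F, i ≠ j → c i = 0 ∨ c j = 0) : |∑ i ∈ F, c i| ≤ 1 := by
  by_cases h : ∃ i ∈ F, c i ≠ 0
  · obtain ⟨i0, hi0, hc⟩ := h
    rw [Finset.sum_eq_single_of_mem i0 hi0 ?_]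
    · exact h1 _ hi0
    · intro j hj hne
      rcases h0 j hj i0 hi0 hne with h | h
      · exact h
      · exact absurd h hc
  · push_neg at h
    rw [Finset.sum_eq_zero h]; simp

lemma norm_sum_smul_eI_le_one {ι : Type*} (F : Finset ι) (a : ι → WithBot K) (b : ι → K)
    (s : ι → ℝ) (hs : ∀ i ∈ F, |s i| ≤ 1)
    (hab : ∀ i ∈ F, a i < ↑(b i))
    (hd : ∀ i ∈ F, ∀ j ∈ F, i ≠ j → ((b i : WithBot K) ≤ a j ∨ (b j : WithBot K) ≤ a i)) :
    ‖(∑ i ∈ F, s i • eI (a i) (b i) : C(K,ℝ))‖ ≤ 1 := by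
  rw [ContinuousMap.norm_le _ zero_le_one]
  intro z
  have hz : (∑ i ∈ F, s i • eI (a i) (b i) : C(K,ℝ)) z
      = ∑ i ∈ F, s i * (eI (a i) (b i) z) := by simp
  rw [Real.norm_eq_abs, hz]
  apply abs_sum_le_one'
  · intro i hi
    rw [eI_apply _ _ _ (hab i hi)]
    split
    · simpa using hs i hi
    · simp
  · intro i hi j hj hne
    rw [eI_apply _ _ _ (hab i hi), eI_apply _ _ _ (hab j hj)]
    by_cases hzi : a i < (z : WithBot K) ∧ z ≤ b i
    · by_cases hzj : a j < (z : WithBot K) ∧ z ≤ b j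
      · exfalso
        rcases hd i hi j hj hne with h | h
        · exact absurd ((WithBot.coe_le_coe.2 hzi.2).trans h) (not_le.2 hzj.1)
        · exact absurd ((WithBot.coe_le_coe.2 hzj.2).trans h) (not_le.2 hzi.1)
      · right; rw [if_neg hzj, mul_zero]
    · left; rw [if_neg hzi, mul_zero]

lemma key_bound {ι : Type*} (φ : C(K,ℝ) →L[ℝ] ℝ) (F : Finset ι) (a : ι → WithBot K) (b : ι → K)
    (hab : ∀ i ∈ F, a i < ↑(b i))
    (hd : ∀ i ∈ F, ∀ j ∈ F, i ≠ j → ((b i : WithBot K) ≤ a j ∨ (b j : WithBot K) ≤ a i)) :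
    ∑ i ∈ F, |φ (eI (a i) (b i))| ≤ ‖φ‖ := by
  classical
  set s : ι → ℝ := fun i => if 0 ≤ φ (eI (a i) (b i)) then 1 else -1 with hs
  set g : C(K,ℝ) := ∑ i ∈ F, s i • eI (a i) (b i) with hg
  have hval : ∀ i, s i * φ (eI (a i) (b i)) = |φ (eI (a i) (b i))| := by
    intro i
    by_cases h : 0 ≤ φ (eI (a i) (b i))
    · rw [hs]; simp [h, abs_of_nonneg h]
    · rw [hs]; simp only [h, if_false]
      rw [abs_of_neg (not_le.1 h)]; ring
  have hφg : φ g = ∑ i ∈ F, |φ (eI (a i) (b i))| := by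
    rw [hg, map_sum]
    refine Finset.sum_congr rfl fun i _ => ?_
    rw [map_smul, smul_eq_mul, hval]
  have hgnorm : ‖g‖ ≤ 1 :=
    norm_sum_smul_eI_le_one F a b s
      (fun i _ => by by_cases h : 0 ≤ φ (eI (a i) (b i)) <;> simp [hs, h]) hab hd
  calc ∑ i ∈ F, |φ (eI (a i) (b i))| = φ g := hφg.symm
    _ ≤ |φ g| := le_abs_self _
    _ ≤ ‖φ‖ * ‖g‖ := by rw [← Real.norm_eq_abs]; exact φ.le_opNorm g
    _ ≤ ‖φ‖ * 1 := mul_le_mul_of_nonneg_left hgnorm (norm_nonneg φ)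
    _ = ‖φ‖ := mul_one _

lemma summable_abs_lp (f : lp (fun _ : K => ℝ) 1) : Summable fun x => |f x| := by
  have h := (lp.memℓp f).summable (p := 1) (by norm_num)
  simpa using h

lemma norm_lp_eq (f : lp (fun _ : K => ℝ) 1) : ‖f‖ = ∑' x, |f x| := by
  rw [lp.norm_eq_tsum_rpow (by norm_num) f]
  simp [Real.rpow_one]

lemma summable_mul_lp (f : lp (fun _ : K => ℝ) 1) (g : C(K,ℝ)) :
    Summable fun x => f x * g x := by
  refine Summable.of_norm (Summable.of_nonneg_of_le (fun x => norm_nonneg _) (fun x => ?_)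
    ((summable_abs_lp f).mul_right ‖g‖))
  rw [norm_mul]
  exact mul_le_mul_of_nonneg_left (g.norm_coe_le_norm x) (norm_nonneg _)

lemma pairing_abs_le (f : lp (fun _ : K => ℝ) 1) (g : C(K,ℝ)) :
    ‖∑' x, f x * g x‖ ≤ ‖f‖ * ‖g‖ := by
  calc ‖∑' x, f x * g x‖ ≤ ∑' x, ‖f x * g x‖ :=
        norm_tsum_le_tsum_norm (summable_mul_lp f g).norm
    _ ≤ ∑' x, |f x| * ‖g‖ := by
        refine Summable.tsum_le_tsum (fun x => ?_) (summable_mul_lp f g).norm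
          ((summable_abs_lp f).mul_right ‖g‖)
        rw [norm_mul]
        exact mul_le_mul_of_nonneg_left (g.norm_coe_le_norm x) (norm_nonneg _)
    _ = ‖f‖ * ‖g‖ := by rw [tsum_mul_right, norm_lp_eq]

/-- The pairing functional. -/
noncomputable def Tfun (f : lp (fun _ : K => ℝ) 1) : C(K,ℝ) →L[ℝ] ℝ :=
  LinearMap.mkContinuous
    { toFun := fun g => ∑' x, f x * g x
      map_add' := fun g h => by
        simp_rw [ContinuousMap.add_apply, mul_add]
        exact Summable.tsum_add (summable_mul_lp f g) (summable_mul_lp f h)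
      map_smul' := fun c g => by
        simp_rw [ContinuousMap.smul_apply, smul_eq_mul, RingHom.id_apply, mul_left_comm]
        exact tsum_mul_left }
    ‖f‖ (fun g => pairing_abs_le f g)

lemma Tfun_apply (f : lp (fun _ : K => ℝ) 1) (g : C(K,ℝ)) :
    Tfun f g = ∑' x, f x * g x := rfl

lemma Tfun_norm_le (f : lp (fun _ : K => ℝ) 1) : ‖Tfun f‖ ≤ ‖f‖ :=
  LinearMap.mkContinuous_norm_le _ (norm_nonneg f) _

lemma Tfun_add (f f' : lp (fun _ : K => ℝ) 1) : Tfun (f + f') = Tfun f + Tfun f' := by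
  ext g
  simp only [Tfun_apply, ContinuousLinearMap.add_apply]
  rw [← Summable.tsum_add (summable_mul_lp f g) (summable_mul_lp f' g)]
  exact tsum_congr fun x => by rw [lp.coeFn_add, Pi.add_apply, add_mul]

lemma Tfun_smul (c : ℝ) (f : lp (fun _ : K => ℝ) 1) : Tfun (c • f) = c • Tfun f := by
  ext g
  simp only [Tfun_apply, ContinuousLinearMap.smul_apply, smul_eq_mul]
  rw [← tsum_mul_left]
  exact tsum_congr fun x => by rw [lp.coeFn_smul, Pi.smul_apply, smul_eq_mul, mul_assoc]

-- Chunk 4: lower bound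
lemma norm_le_Tfun (f : lp (fun _ : K => ℝ) 1) : ‖f‖ ≤ ‖Tfun f‖ := by
  classical
  rw [norm_lp_eq]
  refine le_of_forall_pos_le_add fun ε hε => ?_
  obtain ⟨F, hF⟩ : ∃ F : Finset K, ∑' x : {x : K // x ∉ F}, |f x| < ε/2 :=
    ((tendsto_tsum_compl_atTop_zero (fun x : K => |f x|)).eventually
      (gt_mem_nhds (half_pos hε))).exists
  set a : K → WithBot K := fun x =>
    if h : (F.filter (fun y => y < x)).Nonempty then ↑((F.filter (fun y => y < x)).max' h)
    else ⊥ with ha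
  have hax : ∀ x : K, a x < ↑x := by
    intro x
    by_cases h : (F.filter (fun y => y < x)).Nonempty
    · rw [ha]; simp only [h, dif_pos, WithBot.coe_lt_coe]
      exact (Finset.mem_filter.1 ((F.filter _).max'_mem h)).2
    · rw [ha]; simp only [h, dif_neg, not_false_iff]
      exact WithBot.bot_lt_coe x
  have hd : ∀ x ∈ F, ∀ y ∈ F, x ≠ y → ((x : WithBot K) ≤ a y ∨ (y : WithBot K) ≤ a x) := by
    have key : ∀ x ∈ F, ∀ y : K, x < y → (x : WithBot K) ≤ a y := by
      intro x hx y hxy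
      have hmem : x ∈ F.filter (fun z => z < y) := by
        rw [Finset.mem_filter]; exact ⟨hx, hxy⟩
      have hne : (F.filter (fun z => z < y)).Nonempty := ⟨x, hmem⟩
      rw [ha]; simp only [hne, dif_pos, WithBot.coe_le_coe]
      exact Finset.le_max' _ x hmem
    intro x hx y hy hne
    rcases lt_or_gt_of_ne hne with h | h
    · exact Or.inl (key x hx y h)
    · exact Or.inr (key y hy x h)
  set s : K → ℝ := fun x => if 0 ≤ f x then 1 else -1 with hsdef
  set g : C(K,ℝ) := ∑ x ∈ F, s x • eI (a x) x with hg
  have hs1 : ∀ x ∈ F, |s x| ≤ 1 := fun x _ => by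
    by_cases h : 0 ≤ f x <;> simp [hsdef, h]
  have hgnorm : ‖g‖ ≤ 1 :=
    norm_sum_smul_eI_le_one F a (fun x => x) s hs1 (fun i _ => hax i) hd
  -- value of g at points of F
  have hgF : ∀ x ∈ F, g x = s x := by
    intro x hx
    have hz : g x = ∑ y ∈ F, s y * (eI (a y) y x) := by rw [hg]; simp
    rw [hz, Finset.sum_eq_single_of_mem x hx]
    · rw [eI_apply _ _ _ (hax x), if_pos ⟨hax x, le_refl x⟩, mul_one]
    · intro y hy hne
      rw [eI_apply _ _ _ (hax y)]
      rw [if_neg, mul_zero]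
      rintro ⟨h1, h2⟩
      rcases hd y hy x hx hne with h | h
      · exact absurd ((WithBot.coe_le_coe.2 h2).trans h) (not_le.2 (hax x))
      · exact absurd h (not_le.2 h1)
  have hsum := Summable.sum_add_tsum_compl (s := F) (summable_mul_lp f g)
  have habs := Summable.sum_add_tsum_compl (s := F) (summable_abs_lp f)
  have hFterm : ∀ x ∈ F, f x * g x = |f x| := by
    intro x hx
    rw [hgF x hx, hsdef]
    by_cases h : 0 ≤ f x
    · simp [h, abs_of_nonneg h]
    · simp only [h, if_false, mul_neg, mul_one]
      rw [abs_of_neg (not_le.1 h)]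
  have htail2 : |∑' x : {x : K // x ∉ F}, f x * g x| ≤ ∑' x : {x : K // x ∉ F}, |f x| := by
    have hsub1 : Summable fun x : {x : K // x ∉ F} => f x * g x :=
      (summable_mul_lp f g).subtype _
    have hsub2 : Summable fun x : {x : K // x ∉ F} => |f (x : K)| :=
      (summable_abs_lp f).subtype _
    calc |∑' x : {x : K // x ∉ F}, f x * g x| ≤ ∑' x : {x : K // x ∉ F}, |f x * g x| := by
          rw [← Real.norm_eq_abs]
          exact norm_tsum_le_tsum_norm hsub1.abs
      _ ≤ ∑' x : {x : K // x ∉ F}, |f x| := by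
          refine Summable.tsum_le_tsum (fun x => ?_) hsub1.abs hsub2
          rw [abs_mul]
          calc |f x| * |g x| ≤ |f x| * 1 := by
                refine mul_le_mul_of_nonneg_left ?_ (abs_nonneg _)
                rw [← Real.norm_eq_abs]
                exact (g.norm_coe_le_norm _).trans hgnorm
            _ = |f x| := mul_one _
  -- main estimate
  have hTfg : Tfun f g = ∑ x ∈ F, |f x| + ∑' x : {x : K // x ∉ F}, f x * g x := by
    rw [Tfun_apply, ← hsum]
    congr 1
    exact Finset.sum_congr rfl hFterm
  have hmain : ∑ x ∈ F, |f x| ≤ ‖Tfun f‖ + ε/2 := by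
    have h1 : ∑ x ∈ F, |f x| = Tfun f g - ∑' x : {x : K // x ∉ F}, f x * g x := by
      rw [hTfg]; ring
    rw [h1]
    have h2 : |Tfun f g| ≤ ‖Tfun f‖ := by
      rw [← Real.norm_eq_abs]
      calc ‖Tfun f g‖ ≤ ‖Tfun f‖ * ‖g‖ := (Tfun f).le_opNorm g
        _ ≤ ‖Tfun f‖ * 1 := mul_le_mul_of_nonneg_left hgnorm (ContinuousLinearMap.opNorm_nonneg _)
        _ = ‖Tfun f‖ := mul_one _
    have := htail2.trans hF.le
    calc Tfun f g - ∑' x : {x : K // x ∉ F}, f x * g x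
        ≤ |Tfun f g| + |∑' x : {x : K // x ∉ F}, f x * g x| := by
          have := abs_sub_abs_le_abs_sub (Tfun f g) (∑' x : {x : K // x ∉ F}, f x * g x)
          nlinarith [le_abs_self (Tfun f g), neg_abs_le (∑' x : {x : K // x ∉ F}, f x * g x)]
      _ ≤ ‖Tfun f‖ + ε/2 := add_le_add h2 this
  calc ∑' x, |f x| = ∑ x ∈ F, |f x| + ∑' x : {x : K // x ∉ F}, |f x| := habs.symm
    _ ≤ (‖Tfun f‖ + ε/2) + ε/2 := add_le_add hmain hF.le
    _ = ‖Tfun f‖ + ε := by ring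

/-- The pairing as a linear isometry. -/
noncomputable def Tiso : lp (fun _ : K => ℝ) 1 →ₗᵢ[ℝ] (C(K,ℝ) →L[ℝ] ℝ) :=
{ toFun := Tfun
  map_add' := Tfun_add
  map_smul' := Tfun_smul
  norm_map' := fun f => le_antisymm (Tfun_norm_le f) (norm_le_Tfun f) }

-- Chunk 5: existence of left limits
lemma exists_limit (φ : C(K,ℝ) →L[ℝ] ℝ) (x : K) (hx : x ≠ ⊥) :
    ∃ l : ℝ, Tendsto (fun β : ↥(Set.Iio x) => φ (eK (β : K))) atTop (𝓝 l) := by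
  have hbot : (⊥ : K) < x := (bot_lt_iff_ne_bot.2 hx)
  haveI : Nonempty ↥(Set.Iio x) := ⟨⟨⊥, hbot⟩⟩
  set u : ↥(Set.Iio x) → ℝ := fun β => φ (eK (β : K)) with hu
  refine cauchySeq_tendsto_of_complete ?_
  rw [Metric.cauchySeq_iff]
  by_contra hc
  push_neg at hc
  obtain ⟨ε, hε, hcc⟩ := hc
  have step : ∀ N : ↥(Set.Iio x), ∃ pq : ↥(Set.Iio x) × ↥(Set.Iio x),
      N ≤ pq.1 ∧ pq.1 < pq.2 ∧ ε ≤ |u pq.2 - u pq.1| := by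
    intro N
    obtain ⟨m, hm, n, hn, hdist⟩ := hcc N
    have hmn : m ≠ n := by
      rintro rfl; rw [dist_self] at hdist; linarith
    rcases lt_or_gt_of_ne hmn with h | h
    · refine ⟨(m, n), hm, h, ?_⟩
      rw [Real.dist_eq] at hdist
      rw [abs_sub_comm]; linarith
    · refine ⟨(n, m), hn, h, ?_⟩
      rw [Real.dist_eq] at hdist; linarith
  choose st hst1 hst2 hst3 using step
  set r : ℕ → ↥(Set.Iio x) × ↥(Set.Iio x) := fun n =>
    Nat.rec (st ⟨⊥, hbot⟩) (fun _ p => st p.2) n with hr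
  have hrsucc : ∀ k, r (k+1) = st (r k).2 := fun k => rfl
  have hlt : ∀ k, (r k).1 < (r k).2 := by
    intro k
    cases k with
    | zero => exact hst2 _
    | succ k => rw [hrsucc]; exact hst2 _
  have hgap : ∀ k, ε ≤ |u (r k).2 - u (r k).1| := by
    intro k
    cases k with
    | zero => exact hst3 _
    | succ k => rw [hrsucc]; exact hst3 _
  have hchain : ∀ k, (r k).2 ≤ (r (k+1)).1 := by
    intro k; rw [hrsucc]; exact hst1 _
  have hmono : ∀ i j, i < j → (r i).2 ≤ (r j).1 := by
    intro i j hij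
    induction j with
    | zero => omega
    | succ j ih =>
      rcases Nat.lt_succ_iff_lt_or_eq.1 hij with h | h
      · exact ((ih h).trans (hlt j).le).trans (hchain j)
      · subst h; exact hchain i
  obtain ⟨n, hn⟩ := exists_nat_gt (‖φ‖ / ε)
  have hkey := key_bound φ (Finset.range n)
    (fun k => ((((r k).1 : ↥(Set.Iio x)) : K) : WithBot K)) (fun k => (((r k).2 : ↥(Set.Iio x)) : K))
    (fun k _ => WithBot.coe_lt_coe.2 (Subtype.coe_lt_coe.2 (hlt k)))
    (by
      intro i _ j _ hne
      rcases lt_or_gt_of_ne hne with h | h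
      · exact Or.inl (WithBot.coe_le_coe.2 (Subtype.coe_le_coe.2 (hmono i j h)))
      · exact Or.inr (WithBot.coe_le_coe.2 (Subtype.coe_le_coe.2 (hmono j i h))))
  have hterm : ∀ k ∈ Finset.range n, ε ≤ |φ (eI (((r k).1 : ↥(Set.Iio x)) : K) (((r k).2 : ↥(Set.Iio x)) : K))| := by
    intro k _
    rw [eI_coe, map_sub]
    exact hgap k
  have hsum : (n : ℝ) * ε ≤ ∑ k ∈ Finset.range n, |φ (eI (((r k).1 : ↥(Set.Iio x)) : K) (((r k).2 : ↥(Set.Iio x)) : K))| := by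
    calc (n : ℝ) * ε = ∑ _k ∈ Finset.range n, ε := by
          rw [Finset.sum_const, Finset.card_range, nsmul_eq_mul]
      _ ≤ _ := Finset.sum_le_sum hterm
  have : ‖φ‖ < (n : ℝ) * ε := by
    rw [div_lt_iff₀ hε] at hn; linarith
  linarith

-- Chunk 6: the atom function
/-- left limit of `φ ∘ eK` at `x` (0 at `⊥`). -/
noncomputable def Lphi (φ : C(K,ℝ) →L[ℝ] ℝ) (x : K) : ℝ :=
  if hx : x = ⊥ then 0 else (exists_limit φ x hx).choose

lemma tendsto_Lphi (φ : C(K,ℝ) →L[ℝ] ℝ) (x : K) (hx : x ≠ ⊥) :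
    Tendsto (fun β : ↥(Set.Iio x) => φ (eK (β : K))) atTop (𝓝 (Lphi φ x)) := by
  rw [Lphi, dif_neg hx]
  exact (exists_limit φ x hx).choose_spec

lemma Lphi_bot (φ : C(K,ℝ) →L[ℝ] ℝ) : Lphi φ (⊥ : K) = 0 := by rw [Lphi, dif_pos rfl]

/-- the atomic part of `φ` at `x`. -/
noncomputable def fphi (φ : C(K,ℝ) →L[ℝ] ℝ) (x : K) : ℝ := φ (eK x) - Lphi φ x

lemma fphi_sum_le (φ : C(K,ℝ) →L[ℝ] ℝ) (F : Finset K) :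
    ∑ x ∈ F, |fphi φ x| ≤ ‖φ‖ := by
  classical
  refine le_of_forall_pos_le_add fun ε hε => ?_
  set δ : ℝ := ε / (F.card + 1) with hδdef
  have hδ : 0 < δ := by positivity
  have claim : ∀ x : K, ∃ ax : WithBot K, ax < ↑x ∧ (∀ y ∈ F, y < x → (y : WithBot K) ≤ ax) ∧
      |fphi φ x| ≤ |φ (eI ax x)| + δ := by
    intro x
    by_cases hx : x = ⊥
    · subst hx
      refine ⟨⊥, WithBot.bot_lt_coe _, fun y _ hy => absurd hy (not_lt_bot), ?_⟩
      rw [eI_bot, fphi, Lphi_bot, sub_zero]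
      linarith [abs_nonneg (φ (eK (⊥ : K)))]
    · haveI : Nonempty ↥(Set.Iio x) := ⟨⟨⊥, (bot_lt_iff_ne_bot.2 hx)⟩⟩
      -- an element of Iio x dominating F ∩ Iio x
      have hM : ∃ M : ↥(Set.Iio x), ∀ y ∈ F, y < x → y ≤ (M : K) := by
        by_cases hne : (F.filter (fun y => y < x)).Nonempty
        · refine ⟨⟨(F.filter (fun y => y < x)).max' hne,
            (Finset.mem_filter.1 ((F.filter _).max'_mem hne)).2⟩, fun y hy hyx => ?_⟩
          have hmem : y ∈ F.filter (fun z => z < x) := by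
            rw [Finset.mem_filter]; exact ⟨hy, hyx⟩
          exact Finset.le_max' _ y hmem
        · refine ⟨⟨⊥, (bot_lt_iff_ne_bot.2 hx)⟩, fun y hy hyx => ?_⟩
          have hmem : y ∈ F.filter (fun z => z < x) := by
            rw [Finset.mem_filter]; exact ⟨hy, hyx⟩
          exact absurd ⟨y, hmem⟩ hne
      obtain ⟨M, hM⟩ := hM
      have hev : ∀ᶠ β : ↥(Set.Iio x) in atTop,
          dist (φ (eK (β : K))) (Lphi φ x) < δ ∧ M ≤ β :=
        (Metric.tendsto_nhds.mp (tendsto_Lphi φ x hx) δ hδ).and (eventually_ge_atTop M)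
      obtain ⟨β, hβ1, hβ2⟩ := hev.exists
      rw [Real.dist_eq] at hβ1
      refine ⟨((β : K) : WithBot K), WithBot.coe_lt_coe.2 β.2, fun y hy hyx =>
        WithBot.coe_le_coe.2 ((hM y hy hyx).trans (Subtype.coe_le_coe.2 hβ2)), ?_⟩
      rw [eI_coe, map_sub]
      have : fphi φ x = (φ (eK x) - φ (eK (β : K))) + (φ (eK (β : K)) - Lphi φ x) := by
        rw [fphi]; ring
      rw [this]
      calc |(φ (eK x) - φ (eK (β : K))) + (φ (eK (β : K)) - Lphi φ x)|
          ≤ |φ (eK x) - φ (eK (β : K))| + |φ (eK (β : K)) - Lphi φ x| := abs_add_le _ _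
        _ ≤ |φ (eK x) - φ (eK (β : K))| + δ := by linarith
  choose a ha1 ha2 ha3 using claim
  have hkey := key_bound φ F a (fun x => x) (fun x _ => ha1 x) (by
    intro x hx y hy hne
    rcases lt_or_gt_of_ne hne with h | h
    · exact Or.inl (ha2 y x hx h)
    · exact Or.inr (ha2 x y hy h))
  calc ∑ x ∈ F, |fphi φ x| ≤ ∑ x ∈ F, (|φ (eI (a x) x)| + δ) := Finset.sum_le_sum fun x _ => ha3 x
    _ = ∑ x ∈ F, |φ (eI (a x) x)| + F.card * δ := by
        rw [Finset.sum_add_distrib, Finset.sum_const, nsmul_eq_mul]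
    _ ≤ ‖φ‖ + F.card * δ := by linarith
    _ ≤ ‖φ‖ + ε := by
        have h1 : (0:ℝ) < (F.card : ℝ) + 1 := by positivity
        have : (F.card : ℝ) * δ ≤ ε := by
          rw [hδdef, mul_comm, div_mul_eq_mul_div, div_le_iff₀ h1]
          nlinarith [hε.le, Nat.cast_nonneg (α := ℝ) F.card]
        linarith

lemma memℓp_fphi (φ : C(K,ℝ) →L[ℝ] ℝ) : Memℓp (fphi φ) (1 : ℝ≥0∞) := by
  refine memℓp_gen' (C := ‖φ‖) (fun s => ?_)
  calc ∑ i ∈ s, ‖fphi φ i‖ ^ (1 : ℝ≥0∞).toReal = ∑ i ∈ s, |fphi φ i| := by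
        simp [Real.norm_eq_abs]
    _ ≤ ‖φ‖ := fphi_sum_le φ s

/-- the candidate `ℓ¹` element representing `φ`. -/
noncomputable def Fphi (φ : C(K,ℝ) →L[ℝ] ℝ) : lp (fun _ : K => ℝ) 1 := ⟨fphi φ, memℓp_fphi φ⟩

lemma Fphi_coe (φ : C(K,ℝ) →L[ℝ] ℝ) (x : K) : (Fphi φ : ∀ _ : K, ℝ) x = fphi φ x := rfl

-- Chunk 6b: tail sums
lemma tendsto_sum_Iic (f : K → ℝ) (hf : Summable fun y => |f y|) (x : K) (hx : x ≠ ⊥) :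
    Tendsto (fun β : ↥(Set.Iio x) => ∑' y : ↥(Set.Iic (β : K)), f y) atTop
      (𝓝 (∑' y : ↥(Set.Iio x), f y)) := by
  classical
  have hf' : Summable f := summable_abs_iff.1 hf
  haveI : Nonempty ↥(Set.Iio x) := ⟨⟨⊥, bot_lt_iff_ne_bot.2 hx⟩⟩
  rw [Metric.tendsto_atTop]
  intro ε hε
  obtain ⟨E, hE⟩ : ∃ E : Finset K, ∑' y : {y : K // y ∉ E}, |f y| < ε :=
    ((tendsto_tsum_compl_atTop_zero (fun y : K => |f y|)).eventually
      (gt_mem_nhds hε)).exists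
  have hNex : ∃ N : ↥(Set.Iio x), ∀ y ∈ E, y < x → y ≤ (N : K) := by
    by_cases hne : (E.filter (fun y => y < x)).Nonempty
    · refine ⟨⟨(E.filter (fun y => y < x)).max' hne,
        (Finset.mem_filter.1 ((E.filter _).max'_mem hne)).2⟩, fun y hy hyx => ?_⟩
      have hmem : y ∈ E.filter (fun z => z < x) := by
        rw [Finset.mem_filter]; exact ⟨hy, hyx⟩
      exact Finset.le_max' _ y hmem
    · refine ⟨⟨⊥, bot_lt_iff_ne_bot.2 hx⟩, fun y hy hyx => ?_⟩
      have hmem : y ∈ E.filter (fun z => z < x) := by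
        rw [Finset.mem_filter]; exact ⟨hy, hyx⟩
      exact absurd ⟨y, hmem⟩ hne
  obtain ⟨N, hN⟩ := hNex
  refine ⟨N, fun β hβ => ?_⟩
  have hsplit : Set.Iio x = Set.Iic (β : K) ∪ Set.Ioo (β : K) x := by
    ext y
    simp only [Set.mem_Iio, Set.mem_union, Set.mem_Iic, Set.mem_Ioo]
    constructor
    · intro hy
      rcases le_or_gt y (β : K) with h | h
      · exact Or.inl h
      · exact Or.inr ⟨h, hy⟩
    · rintro (h | ⟨_, h⟩)
      · exact lt_of_le_of_lt h β.2
      · exact h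
  have hdisj : Disjoint (Set.Iic (β : K)) (Set.Ioo (β : K) x) := by
    rw [Set.disjoint_left]
    rintro y hy ⟨h1, _⟩
    exact absurd hy (not_le.2 h1)
  have hsum : ∑' y : ↥(Set.Iio x), f y
      = ∑' y : ↥(Set.Iic (β : K)), f y + ∑' y : ↥(Set.Ioo (β : K) x), f y := by
    rw [tsum_congr_set_coe f hsplit]
    exact Summable.tsum_union_disjoint hdisj (hf'.subtype _) (hf'.subtype _)
  rw [Real.dist_eq, hsum]
  have heq : ∑' y : ↥(Set.Iic (β : K)), f y
      - (∑' y : ↥(Set.Iic (β : K)), f y + ∑' y : ↥(Set.Ioo (β : K) x), f y)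
      = -(∑' y : ↥(Set.Ioo (β : K) x), f y) := by ring
  rw [heq, abs_neg]
  have hnotE : ∀ y : K, y ∈ Set.Ioo (β : K) x → y ∉ E := by
    intro y hy hyE
    have h1 : y ≤ (N : K) := hN y hyE hy.2
    have h2 : (N : K) ≤ (β : K) := Subtype.coe_le_coe.2 hβ
    exact absurd (h1.trans h2) (not_le.2 hy.1)
  have habs : |∑' y : ↥(Set.Ioo (β : K) x), f y| ≤ ∑' y : ↥(Set.Ioo (β : K) x), |f y| := by
    rw [← Real.norm_eq_abs]
    exact norm_tsum_le_tsum_norm (hf.subtype _)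
  have hsubset : ∑' y : ↥(Set.Ioo (β : K) x), |f (y : K)|
      ≤ ∑' y : {y : K // y ∉ E}, |f (y : K)| := by
    refine Summable.tsum_le_tsum_of_inj (fun y => ⟨(y : K), hnotE _ y.2⟩)
      (fun y z hyz => by
        apply Subtype.ext
        have h' := congrArg Subtype.val hyz
        simpa using h')
      (fun c _ => abs_nonneg _) (fun y => le_rfl) (hf.subtype _) (hf.subtype _)
  exact lt_of_le_of_lt (habs.trans hsubset) hE

-- Chunk 6c
lemma Tfun_eK (f : lp (fun _ : K => ℝ) 1) (γ : K) :
    Tfun f (eK γ) = ∑' y : ↥(Set.Iic γ), f (y : K) := by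
  rw [Tfun_apply, tsum_subtype]
  refine tsum_congr fun y => ?_
  by_cases h : y ≤ γ
  · simp [eK_apply, Set.indicator_apply, Set.mem_Iic, h]
  · simp [eK_apply, Set.indicator_apply, Set.mem_Iic, h]

-- Chunk 6d: transfinite induction
lemma phi_eq_on_eK [WellFoundedLT K] (φ : C(K,ℝ) →L[ℝ] ℝ) (γ : K) :
    φ (eK γ) = Tfun (Fphi φ) (eK γ) := by
  induction γ using WellFoundedLT.induction with
  | ind γ ih =>
  have hsummable : Summable fun y => |fphi φ y| := summable_abs_lp (Fphi φ)
  rw [Tfun_eK]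
  show φ (eK γ) = ∑' y : ↥(Set.Iic γ), fphi φ (y : K)
  by_cases hγ : γ = ⊥
  · subst hγ
    rw [show Set.Iic (⊥ : K) = {⊥} from Set.Iic_bot, tsum_singleton, fphi, Lphi_bot, sub_zero]
  · haveI : Nonempty ↥(Set.Iio γ) := ⟨⟨⊥, bot_lt_iff_ne_bot.2 hγ⟩⟩
    have t1 : Tendsto (fun β : ↥(Set.Iio γ) => φ (eK (β : K))) atTop (𝓝 (Lphi φ γ)) :=
      tendsto_Lphi φ γ hγ
    have t2 : Tendsto (fun β : ↥(Set.Iio γ) => ∑' y : ↥(Set.Iic (β : K)), fphi φ (y : K)) atTop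
        (𝓝 (∑' y : ↥(Set.Iio γ), fphi φ (y : K))) := tendsto_sum_Iic _ hsummable γ hγ
    have heq : (fun β : ↥(Set.Iio γ) => φ (eK (β : K)))
        = fun β : ↥(Set.Iio γ) => ∑' y : ↥(Set.Iic (β : K)), fphi φ (y : K) := by
      funext β
      rw [ih (β : K) β.2, Tfun_eK]
      rfl
    rw [heq] at t1
    have hLeq : Lphi φ γ = ∑' y : ↥(Set.Iio γ), fphi φ (y : K) := tendsto_nhds_unique t1 t2
    have hd : Disjoint (Set.Iio γ) ({γ} : Set K) := by
      rw [Set.disjoint_left]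
      rintro y hy rfl
      exact lt_irrefl _ hy
    have hsplit : ∑' y : ↥(Set.Iic γ), fphi φ (y : K)
        = ∑' y : ↥(Set.Iio γ), fphi φ (y : K) + fphi φ γ := by
      rw [← Set.Iio_union_right,
        Summable.tsum_union_disjoint hd ((summable_abs_iff.1 hsummable).subtype _)
          ((summable_abs_iff.1 hsummable).subtype _), tsum_singleton]
    rw [hsplit, ← hLeq, fphi]
    ring

-- Chunk 7: density
lemma closure_span_eK :
    closure ((Submodule.span ℝ (Set.range (eK : K → C(K,ℝ))) : Submodule ℝ C(K,ℝ)) : Set C(K,ℝ))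
      = Set.univ := by
  classical
  set M := Submodule.span ℝ (Set.range (eK : K → C(K,ℝ))) with hM
  have h1 : (1 : C(K,ℝ)) ∈ M := Submodule.subset_span ⟨⊤, eK_top⟩
  have hmulle : M * M ≤ M := by
    rw [hM, Submodule.span_mul_span]
    refine Submodule.span_le.2 ?_
    rintro _ ⟨_, ⟨γ, rfl⟩, _, ⟨δ, rfl⟩, rfl⟩
    exact Submodule.subset_span ⟨min γ δ, (eK_mul γ δ).symm⟩
  have hmul : ∀ x y : C(K,ℝ), x ∈ M → y ∈ M → x * y ∈ M := fun x y hx hy =>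
    hmulle (Submodule.mul_mem_mul hx hy)
  set A : Subalgebra ℝ C(K,ℝ) := M.toSubalgebra h1 hmul with hA
  have hsep : A.SeparatesPoints := by
    intro x y hxy
    rcases lt_or_gt_of_ne hxy with h | h
    · refine ⟨_, ⟨eK x, Submodule.subset_span ⟨x, rfl⟩, rfl⟩, ?_⟩
      show eK x x ≠ eK x y
      rw [eK_apply, eK_apply, if_pos le_rfl, if_neg (not_le.2 h)]
      norm_num
    · refine ⟨_, ⟨eK y, Submodule.subset_span ⟨y, rfl⟩, rfl⟩, ?_⟩
      show eK y x ≠ eK y y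
      rw [eK_apply, eK_apply, if_neg (not_le.2 h), if_pos le_rfl]
      norm_num
  have htop := ContinuousMap.subalgebra_topologicalClosure_eq_top_of_separatesPoints A hsep
  have : (A.topologicalClosure : Set C(K,ℝ)) = Set.univ := by
    rw [htop]; rfl
  rw [← this]
  rfl

lemma Tfun_surj [WellFoundedLT K] :
    Function.Surjective (fun f : lp (fun _ : K => ℝ) 1 => Tfun f) := by
  intro φ
  refine ⟨Fphi φ, ?_⟩
  have hEq : ∀ g ∈ Submodule.span ℝ (Set.range (eK : K → C(K,ℝ))), Tfun (Fphi φ) g = φ g := by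
    intro g hg
    induction hg using Submodule.span_induction with
    | mem g hg => obtain ⟨γ, rfl⟩ := hg; exact (phi_eq_on_eK φ γ).symm
    | zero => simp
    | add u v _ _ hu hv => rw [map_add, map_add, hu, hv]
    | smul c u _ hu => rw [map_smul, map_smul, hu]
  have hdense : Dense ((Submodule.span ℝ (Set.range (eK : K → C(K,ℝ)))
      : Submodule ℝ C(K,ℝ)) : Set C(K,ℝ)) := by
    rw [dense_iff_closure_eq, closure_span_eK]
  have hfun : ⇑(Tfun (Fphi φ)) = ⇑φ :=
    Continuous.ext_on hdense (Tfun (Fphi φ)).continuous φ.continuous hEq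
  exact ContinuousLinearMap.ext fun g => congrFun hfun g

end Dual

universe u

open Cardinal

/-- The ordinal interval `[0, α]`, i.e. the set of ordinals `≤ α`, with its (order) topology,
is a compact space. -/
instance (α : Ordinal.{u}) : CompactSpace (Set.Iic α) := by
  rw [← isCompact_iff_compactSpace, ← Set.Icc_bot]
  exact isCompact_Icc

/-- For every ordinal `α`, the continuous dual space of the Banach space `C([0,α], ℝ)` is
isometrically isomorphic to `ℓ¹([0,α])`, the Banach space of absolutely summable real-valued
families indexed by the set of ordinals `≤ α`, with the `ℓ¹`-norm. -/
theorem statement15 (α : Ordinal.{u}) :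
    Nonempty ((C(Set.Iic α, ℝ) →L[ℝ] ℝ) ≃ₗᵢ[ℝ] lp (fun _ : Set.Iic α => ℝ) 1) := by
  refine ⟨(LinearIsometryEquiv.ofSurjective (Tiso (K := Set.Iic α)) ?_).symm⟩
  exact Tfun_surj
end

section
/- Let λ be an infinite cardinal and let (E_i)_{i ∈ I} be a family of real Banach spaces, each having a dense subset of cardinality at most λ, such that for distinct i, j ∈ I there is no continuous linear bijection with continuous inverse between E_i and E_j. Then the cardinality of I is at most 2^λ. -/
open Set Function Cardinal

open Set Function

lemma key_isometry {α X Y : Type*} [MetricSpace X] [MetricSpace Y]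
    [CompleteSpace X] [CompleteSpace Y]
    (f : α → X) (g : α → Y) (hf : DenseRange f) (hg : DenseRange g)
    (h : ∀ a b, dist (f a) (f b) = dist (g a) (g b)) : Nonempty (X ≃ᵢ Y) := by
  have hzero : ∀ a b, f a = f b → g a = g b := by
    intro a b hab
    have : dist (g a) (g b) = 0 := by rw [← h]; simp [hab]
    exact dist_eq_zero.mp this
  set S : Set X := Set.range f with hS
  have hSdense : Dense S := hf
  set F : S → Y := fun x => g x.2.choose with hF
  have hFval : ∀ a (ha : f a ∈ S), F ⟨f a, ha⟩ = g a := fun a ha => hzero _ _ ha.choose_spec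
  have hFdist : ∀ x y : S, dist (F x) (F y) = dist x y := by
    intro x y
    have hx : f x.2.choose = x.1 := x.2.choose_spec
    have hy : f y.2.choose = y.1 := y.2.choose_spec
    rw [hF]
    simp only [← h]
    rw [hx, hy, Subtype.dist_eq]
  have hFiso : Isometry F := Isometry.of_dist_eq hFdist
  have h_e : IsUniformInducing (Subtype.val : S → X) :=
    isometry_subtype_coe.isUniformInducing
  have h_dense : DenseRange (Subtype.val : S → X) := hSdense.denseRange_val
  set ψ : X → Y := (h_e.isDenseInducing h_dense).extend F with hψ
  have hψc : UniformContinuous ψ :=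
    uniformContinuous_uniformly_extend h_e h_dense hFiso.uniformContinuous
  have hψe : ∀ s : S, ψ s = F s := fun s =>
    uniformly_extend_of_ind h_e h_dense hFiso.uniformContinuous s
  have hψf : ∀ a, ψ (f a) = g a := by
    intro a
    have := hψe ⟨f a, mem_range_self a⟩
    rwa [hFval a (mem_range_self a)] at this
  have hψdist : ∀ x y, dist (ψ x) (ψ y) = dist x y := by
    intro x y
    refine DenseRange.induction_on₂ h_dense
      (p := fun x y => dist (ψ x) (ψ y) = dist x y) ?_ ?_ x y
    · exact isClosed_eq ((hψc.continuous.comp continuous_fst).dist (hψc.continuous.comp continuous_snd)) (continuous_fst.dist continuous_snd)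
    · intro a b
      rw [hψe a, hψe b, hFdist, Subtype.dist_eq]
  have hψiso : Isometry ψ := Isometry.of_dist_eq hψdist
  have hsurj : Surjective ψ := by
    have hcl : IsClosed (Set.range ψ) := hψiso.isClosedEmbedding.isClosed_range
    have hsub : Set.range g ⊆ Set.range ψ := by
      rintro _ ⟨a, rfl⟩; exact ⟨f a, hψf a⟩
    intro y
    have : y ∈ closure (Set.range g) := hg y
    have : y ∈ Set.range ψ := hcl.closure_subset_iff.mpr hsub this
    exact this
  exact ⟨⟨Equiv.ofBijective ψ ⟨hψiso.injective, hsurj⟩, hψiso⟩⟩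

/-- Let `λ` be an infinite cardinal and let `(E i)_{i ∈ I}` be a family of real Banach spaces,
each having a dense subset of cardinality at most `λ`, such that for distinct `i, j ∈ I` there
is no continuous linear bijection with continuous inverse between `E i` and `E j`. Then the
cardinality of `I` is at most `2 ^ λ`. -/
theorem statement17 (lam : Cardinal.{u}) (hlam : Cardinal.aleph0 ≤ lam)
    (I : Type u) (E : I → Type u)
    [∀ i, NormedAddCommGroup (E i)] [∀ i, NormedSpace ℝ (E i)] [∀ i, CompleteSpace (E i)]
    (hdense : ∀ i, ∃ D : Set (E i), Dense D ∧ #D ≤ lam)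
    (hiso : ∀ i j, i ≠ j → IsEmpty (E i ≃L[ℝ] E j)) :
    #I ≤ 2 ^ lam := by
  -- for each i, a dense family indexed by lam.out
  have hfam : ∀ i, ∃ f : lam.out → E i, DenseRange f := by
    intro i
    obtain ⟨D, hD, hcard⟩ := hdense i
    have hne : Nonempty D := by
      rcases hD.nonempty with ⟨x, hx⟩
      exact ⟨⟨x, hx⟩⟩
    have : #D ≤ #lam.out := by rwa [Cardinal.mk_out]
    obtain ⟨ι⟩ := Cardinal.le_def _ _ |>.mp this
    refine ⟨Subtype.val ∘ Function.invFun ι, ?_⟩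
    have hsurj : Surjective (Function.invFun ι) := Function.invFun_surjective ι.injective
    have hrange : Set.range (Subtype.val ∘ Function.invFun ι) = D := by
      rw [Set.range_comp, hsurj.range_eq, Set.image_univ, Subtype.range_val]
    rw [DenseRange, hrange]
    exact hD
  choose f hf using hfam
  set c : I → (lam.out → lam.out → ℝ) := fun i a b => dist (f i a) (f i b) with hc
  have hinj : Function.Injective c := by
    intro i j hij
    by_contra hne
    have h : ∀ a b, dist (f i a) (f i b) = dist (f j a) (f j b) := by
      intro a b
      exact congrFun (congrFun hij a) b
    obtain ⟨φ⟩ := key_isometry (f i) (f j) (hf i) (hf j) h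
    exact (hiso i j hne).false (φ.toRealLinearIsometryEquiv.toContinuousLinearEquiv)
  calc #I ≤ #(lam.out → lam.out → ℝ) := Cardinal.mk_le_of_injective hinj
    _ = 2 ^ lam := by
      rw [Cardinal.mk_arrow, Cardinal.mk_arrow, Cardinal.mk_real, Cardinal.lift_continuum,
        Cardinal.lift_uzero, Cardinal.mk_out, Cardinal.lift_id, Cardinal.lift_id,
        ← Cardinal.power_mul, Cardinal.mul_eq_self hlam,
        ← Cardinal.two_power_aleph0, ← Cardinal.power_mul, Cardinal.aleph0_mul_eq hlam]
end
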